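/- arXiv:2102.05339 — 6 statements merged into one kernel-verified Lean document; each statement's English description precedes it below -/
import Mathlib

section
/- Let A be the disjoint union of nonempty proper subsets B and C, and let L(A) be the free Lie algebra on A. Define simple Lie commutators inductively: elements of A are simple of degree 1, and [u,v] is simple of degree p+q whenever u, v are simple of degrees p, q and [u,v] ≠ 0. Then every simple Lie commutator u of L(A) lies either in the subalgebra L(B) generated by B or in the subalgebra L(C≀B) generated by C≀B. -/
/-- Left-normed iterated Lie bracket. -/
noncomputable def leftNormed {L : Type*} [LieRing L] (x : L) (l : List L) : L :=
  l.foldl (fun u v => ⁅u, v⁆) x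

/-- The wreath set `C ≀ B`. -/
noncomputable def wreathSet {L : Type*} [LieRing L] (C B : Set L) : Set L :=
  {x | ∃ c ∈ C, ∃ l : List L, (∀ b ∈ l, b ∈ B) ∧ x = leftNormed c l}

/-- Simple Lie commutators of the free Lie algebra on `A`: elements of `A` are simple of
degree `1`, and `[u,v]` is simple of degree `p+q` whenever `u, v` are simple of degrees
`p, q` and `[u,v] ≠ 0`. -/
inductive IsSimpleLieCommutator (A : Type*) : FreeLieAlgebra ℤ A → ℕ → Prop
  | of (a : A) : IsSimpleLieCommutator A (FreeLieAlgebra.of ℤ a) 1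
  | bracket {u v : FreeLieAlgebra ℤ A} {p q : ℕ} :
      IsSimpleLieCommutator A u p → IsSimpleLieCommutator A v q →
      ⁅u, v⁆ ≠ 0 → IsSimpleLieCommutator A ⁅u, v⁆ (p + q)

section Aux

variable {R : Type*} {L : Type*} [CommRing R] [LieRing L] [LieAlgebra R L]

/-- If a set is closed under right bracketing by `b`, so is its Lie span. -/
lemma lieSpan_bracket_single (W : Set L) (b : L)
    (hW : ∀ w ∈ W, ⁅w, b⁆ ∈ LieSubalgebra.lieSpan R L W) :
    ∀ x ∈ LieSubalgebra.lieSpan R L W, ⁅x, b⁆ ∈ LieSubalgebra.lieSpan R L W := by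
  set S := LieSubalgebra.lieSpan R L W with hS
  intro x hx
  refine LieSubalgebra.lieSpan_induction (R := R) (p := fun x _ => x ∈ S ∧ ⁅x, b⁆ ∈ S)
    (fun w hw => ⟨LieSubalgebra.subset_lieSpan hw, hW w hw⟩)
    ⟨S.zero_mem, by rw [zero_lie]; exact S.zero_mem⟩
    (fun x y _ _ hx hy => ⟨S.add_mem hx.1 hy.1, by rw [add_lie]; exact S.add_mem hx.2 hy.2⟩)
    (fun r x _ hx => ⟨S.smul_mem r hx.1, by rw [smul_lie]; exact S.smul_mem r hx.2⟩)
    (fun x y _ _ hx hy => ?_) hx |>.2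
  refine ⟨S.lie_mem hx.1 hy.1, ?_⟩
  have h : ⁅⁅x, y⁆, b⁆ = ⁅x, ⁅y, b⁆⁆ - ⁅y, ⁅x, b⁆⁆ := by
    rw [leibniz_lie x y b, lie_lie]; abel
  rw [h]
  exact S.sub_mem (S.lie_mem hx.1 hy.2) (S.lie_mem hy.1 hx.2)

/-- If the Lie span of `W` is closed under right bracketing by each element of `Bs`, it is
closed under right bracketing by each element of the Lie span of `Bs`. -/
lemma lieSpan_bracket_span (W Bs : Set L)
    (hB : ∀ b ∈ Bs, ∀ x ∈ LieSubalgebra.lieSpan R L W,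
      ⁅x, b⁆ ∈ LieSubalgebra.lieSpan R L W) :
    ∀ y ∈ LieSubalgebra.lieSpan R L Bs, ∀ x ∈ LieSubalgebra.lieSpan R L W,
      ⁅x, y⁆ ∈ LieSubalgebra.lieSpan R L W := by
  set S := LieSubalgebra.lieSpan R L W with hS
  intro y hy
  refine LieSubalgebra.lieSpan_induction (R := R) (p := fun y _ => ∀ x ∈ S, ⁅x, y⁆ ∈ S)
    hB
    (fun x _ => by rw [lie_zero]; exact S.zero_mem)
    (fun y z _ _ hy hz x hx => by rw [lie_add]; exact S.add_mem (hy x hx) (hz x hx))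
    (fun r y _ hy x hx => by rw [lie_smul]; exact S.smul_mem r (hy x hx))
    (fun y z _ _ hy hz x hx => ?_) hy
  have h : ⁅x, ⁅y, z⁆⁆ = ⁅⁅x, y⁆, z⁆ - ⁅⁅x, z⁆, y⁆ := by
    rw [leibniz_lie x y z, ← lie_skew y ⁅x, z⁆]; abel
  rw [h]
  exact S.sub_mem (hz _ (hy x hx)) (hy _ (hz x hx))

omit [CommRing R] [LieAlgebra R L] in
lemma wreathSet_bracket (C Bs : Set L) (b : L) (hb : b ∈ Bs)
    (w : L) (hw : w ∈ wreathSet C Bs) : ⁅w, b⁆ ∈ wreathSet C Bs := by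
  obtain ⟨c, hc, l, hl, rfl⟩ := hw
  refine ⟨c, hc, l ++ [b], ?_, ?_⟩
  · intro x hx
    rcases List.mem_append.mp hx with h | h
    · exact hl x h
    · simp at h; subst h; exact hb
  · simp [leftNormed, List.foldl_append]

end Aux

/-- Every simple Lie commutator of `L(A)` lies either in `L(B)` or in `L(C≀B)`. -/
theorem simple_commutator_mem_elimination_summand (A : Type*) (B C : Set A)
    (hdisj : B ∩ C = ∅) (hunion : B ∪ C = Set.univ)
    (hBne : B.Nonempty) (hCne : C.Nonempty)
    (hBproper : B ≠ Set.univ) (hCproper : C ≠ Set.univ)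
    (u : FreeLieAlgebra ℤ A) (n : ℕ) (hu : IsSimpleLieCommutator A u n) :
    u ∈ LieSubalgebra.lieSpan ℤ (FreeLieAlgebra ℤ A) (FreeLieAlgebra.of ℤ '' B) ∨
    u ∈ LieSubalgebra.lieSpan ℤ (FreeLieAlgebra ℤ A)
      (wreathSet (FreeLieAlgebra.of ℤ '' C) (FreeLieAlgebra.of ℤ '' B)) := by
  set L := FreeLieAlgebra ℤ A
  set Bs : Set L := FreeLieAlgebra.of ℤ '' B
  set Cs : Set L := FreeLieAlgebra.of ℤ '' C
  set W : Set L := wreathSet Cs Bs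
  -- the key stability: ⁅lieSpan W, lieSpan Bs⁆ ⊆ lieSpan W
  have key : ∀ y ∈ LieSubalgebra.lieSpan ℤ L Bs, ∀ x ∈ LieSubalgebra.lieSpan ℤ L W,
      ⁅x, y⁆ ∈ LieSubalgebra.lieSpan ℤ L W := by
    apply lieSpan_bracket_span
    intro b hb
    apply lieSpan_bracket_single
    intro w hw
    exact LieSubalgebra.subset_lieSpan (wreathSet_bracket Cs Bs b hb w hw)
  induction hu with
  | of a =>
    rcases (hunion ▸ Set.mem_univ a : a ∈ B ∪ C) with h | h
    · exact Or.inl (LieSubalgebra.subset_lieSpan ⟨a, h, rfl⟩)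
    · refine Or.inr (LieSubalgebra.subset_lieSpan ?_)
      exact ⟨FreeLieAlgebra.of ℤ a, ⟨a, h, rfl⟩, [], by simp, rfl⟩
  | bracket hu hv _ ihu ihv =>
    rcases ihu with hu' | hu' <;> rcases ihv with hv' | hv'
    · exact Or.inl ((LieSubalgebra.lieSpan ℤ L Bs).lie_mem hu' hv')
    · refine Or.inr ?_
      rw [← lie_skew]
      exact neg_mem (key _ hu' _ hv')
    · exact Or.inr (key _ hv' _ hu')
    · exact Or.inr ((LieSubalgebra.lieSpan ℤ L W).lie_mem hu' hv')
end

section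
/- In an associative ℤ-algebra, for any n ≥ 2 and elements a₁, …, a_n, the left-normed Lie commutator satisfies [a₁, …, a_n] = Σ_{κ=0}^{n-1} Σ_{σ ∈ S_{n,κ}} (−1)^κ a_{σ(1)} ⋯ a_{σ(n)}, where S_{n,κ} is the set of permutations σ of {1,…,n} with σ(1) > ⋯ > σ(κ) > σ(κ+1) < σ(κ+2) < ⋯ < σ(n). -/
open scoped Classical

/-- Left-normed Lie commutator of a list of elements of an associative ring,
with the bracket `⁅u,v⁆ = u*v - v*u`. -/
noncomputable def lieList {A : Type*} [Ring A] : List A → A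
  | [] => 0
  | x :: xs => xs.foldl (fun u v => ⁅u, v⁆) x

/-- `σ ∈ S_{n,κ}` (0-indexed): `σ` is strictly decreasing on the first `κ+1` positions and
strictly increasing from position `κ` on. -/
def IsValley (n κ : ℕ) (σ : Equiv.Perm (Fin n)) : Prop :=
  (∀ i j : Fin n, i < j → (j : ℕ) ≤ κ → σ j < σ i) ∧
  (∀ i j : Fin n, i < j → κ ≤ (i : ℕ) → σ i < σ j)

section Aux

variable {α : Type*} [LinearOrder α] [DecidableEq α]

lemma sort_insert_max {U : Finset α} {y : α} (h : ∀ z ∈ U, z < y) :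
    (insert y U).sort (· ≤ ·) = U.sort (· ≤ ·) ++ [y] := by
  have hy : y ∉ U := fun hyU => lt_irrefl y (h y hyU)
  have hnd : (U.sort (· ≤ ·) ++ [y]).Nodup := by
    rw [List.nodup_append]
    refine ⟨Finset.sort_nodup _ _, List.nodup_singleton y, ?_⟩
    intro z hz w hz'
    rw [List.mem_singleton] at hz'
    subst hz'
    rintro rfl
    exact hy ((Finset.mem_sort _).mp hz)
  have hsorted : (U.sort (· ≤ ·) ++ [y]).Pairwise (· ≤ ·) := by
    rw [List.pairwise_append]
    refine ⟨Finset.pairwise_sort _ _, List.pairwise_singleton _ _, ?_⟩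
    intro z hz w hw
    rw [List.mem_singleton] at hw
    subst hw
    exact le_of_lt (h z ((Finset.mem_sort _).mp hz))
  have hfs : (U.sort (· ≤ ·) ++ [y]).toFinset = insert y U := by
    ext z
    simp [or_comm]
  rw [← hfs, (List.toFinset_sort _ hnd).mpr hsorted]

lemma lieList_concat {A : Type*} [Ring A] (L : List A) (hL : L ≠ []) (z : A) :
    lieList (L ++ [z]) = ⁅lieList L, z⁆ := by
  cases L with
  | nil => exact absurd rfl hL
  | cons x xs => simp [lieList, List.foldl_append]

end Aux

lemma key_expansion {A : Type*} [Ring A] {ι : Type*} [LinearOrder ι] [DecidableEq ι] (a : ι → A) (x : ι)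
    (l : List ι) (hx : ∀ y ∈ l, x < y) (hl : l.Pairwise (· < ·)) :
    lieList ((x :: l).map a) =
      ∑ S ∈ l.toFinset.powerset, ((-1 : ℤ) ^ S.card) •
        (((S.sort (· ≤ ·)).reverse ++ ((insert x (l.toFinset \ S)).sort (· ≤ ·))).map a).prod := by
  induction l using List.reverseRecOn with
  | nil => simp [lieList]
  | append_singleton l y ih =>
    -- basic facts
    have hly : ∀ z ∈ l, z < y := by
      intro z hz
      have := (List.pairwise_append.mp hl).2.2 z hz y (List.mem_singleton_self y)
      exact this
    have hl' : l.Pairwise (· < ·) := (List.pairwise_append.mp hl).1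
    have hxy : x < y := hx y (by simp)
    have hx' : ∀ z ∈ l, x < z := fun z hz => hx z (by simp [hz])
    have hyT : y ∉ l.toFinset := fun hy => lt_irrefl y (hly y (List.mem_toFinset.mp hy))
    have hT : (l ++ [y]).toFinset = insert y l.toFinset := by
      ext z; simp [or_comm]
    -- LHS
    have hmap : ((x :: (l ++ [y])).map a) = ((x :: l).map a) ++ [a y] := by simp
    rw [hmap, lieList_concat _ (by simp) (a y), ih hx' hl', hT,
      Finset.sum_powerset_insert hyT]
    -- abbreviation for the old terms
    set F : Finset ι → A := fun S => ((-1 : ℤ) ^ S.card) •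
        (((S.sort (· ≤ ·)).reverse ++ ((insert x (l.toFinset \ S)).sort (· ≤ ·))).map a).prod
      with hF
    have e1 : ∀ S ∈ l.toFinset.powerset, ((-1 : ℤ) ^ S.card) •
        (((S.sort (· ≤ ·)).reverse ++
          ((insert x (insert y l.toFinset \ S)).sort (· ≤ ·))).map a).prod = F S * a y := by
      intro S hS
      have hSsub : S ⊆ l.toFinset := Finset.mem_powerset.mp hS
      have hyS : y ∉ S := fun h => hyT (hSsub h)
      have h1 : insert y l.toFinset \ S = insert y (l.toFinset \ S) := by
        ext z; simp only [Finset.mem_sdiff, Finset.mem_insert]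
        constructor
        · rintro ⟨(rfl | hz), hz2⟩
          · exact Or.inl rfl
          · exact Or.inr ⟨hz, hz2⟩
        · rintro (rfl | ⟨hz1, hz2⟩)
          · exact ⟨Or.inl rfl, hyS⟩
          · exact ⟨Or.inr hz1, hz2⟩
      have h2 : insert x (insert y (l.toFinset \ S)) = insert y (insert x (l.toFinset \ S)) :=
        Finset.insert_comm _ _ _
      have h3 : ∀ z ∈ insert x (l.toFinset \ S), z < y := by
        intro z hz
        rcases Finset.mem_insert.mp hz with rfl | hz
        · exact hxy
        · exact hly z (List.mem_toFinset.mp (Finset.mem_sdiff.mp hz).1)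
      rw [h1, h2, sort_insert_max h3, hF]
      simp only [← List.append_assoc, List.map_append, List.prod_append, List.map_singleton,
        List.prod_singleton, smul_mul_assoc]
    have e2 : ∀ S ∈ l.toFinset.powerset, ((-1 : ℤ) ^ (insert y S).card) •
        ((((insert y S).sort (· ≤ ·)).reverse ++
          ((insert x (insert y l.toFinset \ insert y S)).sort (· ≤ ·))).map a).prod
          = -(a y * F S) := by
      intro S hS
      have hSsub : S ⊆ l.toFinset := Finset.mem_powerset.mp hS
      have hyS : y ∉ S := fun h => hyT (hSsub h)
      have hcard : (insert y S).card = S.card + 1 := Finset.card_insert_of_notMem hyS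
      have h1 : ∀ z ∈ S, z < y := fun z hz => hly z (List.mem_toFinset.mp (hSsub hz))
      have h2 : insert y l.toFinset \ insert y S = l.toFinset \ S := by
        ext z
        simp only [Finset.mem_sdiff, Finset.mem_insert, not_or]
        constructor
        · rintro ⟨(rfl | hz), hz2, hz3⟩
          · exact absurd rfl hz2
          · exact ⟨hz, hz3⟩
        · rintro ⟨hz1, hz2⟩
          exact ⟨Or.inr hz1, fun h => hyT (h ▸ hz1), hz2⟩
      rw [h2, sort_insert_max h1, hcard, hF]
      simp only [List.reverse_append, List.reverse_singleton, List.singleton_append,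
        List.cons_append, List.nil_append, List.map_cons, List.prod_cons, pow_succ,
        mul_smul, neg_smul, one_smul, mul_smul_comm, smul_neg, neg_neg]
    rw [Finset.sum_congr rfl e1, Finset.sum_congr rfl e2, Ring.lie_def, ← Finset.sum_mul,
      Finset.sum_neg_distrib, ← Finset.mul_sum, sub_eq_add_neg]

section Valley

variable {n : ℕ}

lemma take_sorted_of_valley {κ : ℕ} (hκ : κ < n) {σ : Equiv.Perm (Fin n)}
    (h : IsValley n κ σ) : ((List.ofFn σ).take (κ + 1)).Pairwise (· > ·) := by
  rw [List.pairwise_iff_getElem]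
  intro i j hi hj hij
  simp only [List.length_take, List.length_ofFn, lt_min_iff] at hi hj
  simp only [List.getElem_take, List.getElem_ofFn]
  exact h.1 ⟨i, hi.2⟩ ⟨j, hj.2⟩ hij (by simp; omega)

lemma drop_sorted_of_valley {κ : ℕ} {σ : Equiv.Perm (Fin n)}
    (h : IsValley n κ σ) : ((List.ofFn σ).drop κ).Pairwise (· < ·) := by
  rw [List.pairwise_iff_getElem]
  intro i j hi hj hij
  simp only [List.length_drop, List.length_ofFn] at hi hj
  simp only [List.getElem_drop, List.getElem_ofFn]
  exact h.2 ⟨κ + i, by omega⟩ ⟨κ + j, by omega⟩ (by simp [Fin.mk_lt_mk]; omega) (by simp)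

lemma isValley_of_sorted {κ : ℕ} (hκ : κ < n) {σ : Equiv.Perm (Fin n)}
    (h1 : ((List.ofFn σ).take (κ + 1)).Pairwise (· > ·))
    (h2 : ((List.ofFn σ).drop κ).Pairwise (· < ·)) : IsValley n κ σ := by
  constructor
  · intro i j hij hjκ
    have := (List.pairwise_iff_getElem.mp h1) (i : ℕ) (j : ℕ)
      (by simp only [List.length_take, List.length_ofFn]; omega)
      (by simp only [List.length_take, List.length_ofFn]; omega) hij
    simpa using this
  · intro i j hij hκi
    have hκj : κ ≤ (j : ℕ) := le_trans hκi (le_of_lt hij)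
    have := (List.pairwise_iff_getElem.mp h2) ((i : ℕ) - κ) ((j : ℕ) - κ)
      (by simp only [List.length_drop, List.length_ofFn]; omega)
      (by simp only [List.length_drop, List.length_ofFn]; omega) (by omega)
    simp only [List.getElem_drop, List.getElem_ofFn] at this
    have ei : (⟨κ + ((i : ℕ) - κ), by omega⟩ : Fin n) = i := Fin.ext (by simp; omega)
    have ej : (⟨κ + ((j : ℕ) - κ), by omega⟩ : Fin n) = j := Fin.ext (by simp; omega)
    rwa [ei, ej] at this

end Valley

section ValleyFin

variable {m : ℕ}

/-- The set of values taken before the valley. -/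
noncomputable def valleySet (κ : ℕ) (σ : Equiv.Perm (Fin (m + 1))) : Finset (Fin (m + 1)) :=
  ((List.ofFn σ).take κ).toFinset

lemma nodup_ofFn_perm (σ : Equiv.Perm (Fin (m + 1))) : (List.ofFn σ).Nodup :=
  List.nodup_ofFn.mpr σ.injective

lemma take_nodup (κ : ℕ) (σ : Equiv.Perm (Fin (m + 1))) : ((List.ofFn σ).take κ).Nodup :=
  (List.take_sublist _ _).nodup (nodup_ofFn_perm σ)

lemma card_valleySet {κ : ℕ} (hκ : κ ≤ m) (σ : Equiv.Perm (Fin (m + 1))) :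
    (valleySet κ σ).card = κ := by
  rw [valleySet, List.toFinset_card_of_nodup (take_nodup κ σ)]
  simp only [List.length_take, List.length_ofFn]
  omega

lemma zero_not_mem_valleySet {κ : ℕ} (hκ : κ ≤ m) {σ : Equiv.Perm (Fin (m + 1))}
    (h : IsValley (m + 1) κ σ) : (0 : Fin (m + 1)) ∉ valleySet κ σ := by
  intro h0
  rw [valleySet, List.mem_toFinset, List.mem_iff_getElem] at h0
  obtain ⟨p, hp, hp0⟩ := h0
  simp only [List.length_take, List.length_ofFn] at hp
  simp only [List.getElem_take, List.getElem_ofFn] at hp0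
  have := h.1 ⟨p, by omega⟩ ⟨κ, by omega⟩ (by simp [Fin.mk_lt_mk]; omega) (by simp)
  rw [hp0] at this
  exact Fin.not_lt_zero _ this

lemma take_sorted_of_valley' {κ : ℕ} (hκ : κ ≤ m) {σ : Equiv.Perm (Fin (m + 1))}
    (h : IsValley (m + 1) κ σ) : ((List.ofFn σ).take κ).Pairwise (· > ·) := by
  have h1 : (List.ofFn σ).take κ = ((List.ofFn σ).take (κ + 1)).take κ := by
    rw [List.take_take, Nat.min_eq_left (by omega)]
  rw [h1]
  exact List.Pairwise.sublist (List.take_sublist _ _) (take_sorted_of_valley (by omega) h)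

lemma ofFn_valley_eq {κ : ℕ} (hκ : κ ≤ m) {σ : Equiv.Perm (Fin (m + 1))}
    (h : IsValley (m + 1) κ σ) :
    List.ofFn σ = ((valleySet κ σ).sort (· ≤ ·)).reverse ++ ((valleySet κ σ)ᶜ.sort (· ≤ ·)) := by
  have hnd : (List.ofFn σ).Nodup := nodup_ofFn_perm σ
  have sort1 : (valleySet κ σ).sort (· ≤ ·) = ((List.ofFn σ).take κ).reverse := by
    rw [valleySet, ← List.toFinset_reverse]
    refine (List.toFinset_sort _ (List.nodup_reverse.mpr (take_nodup κ σ))).mpr ?_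
    rw [List.pairwise_reverse]
    exact (take_sorted_of_valley' hκ h).imp (fun hab => le_of_lt hab)
  have hdropFS : ((List.ofFn σ).drop κ).toFinset = (valleySet κ σ)ᶜ := by
    ext z
    have hzL : z ∈ List.ofFn σ := by
      rw [List.mem_ofFn]
      exact ⟨σ.symm z, by simp⟩
    conv at hzL => rw [← List.take_append_drop κ (List.ofFn σ)]
    rw [List.mem_append] at hzL
    have hdisj : List.Disjoint ((List.ofFn σ).take κ) ((List.ofFn σ).drop κ) := by
      have := hnd
      rw [← List.take_append_drop κ (List.ofFn σ), List.nodup_append] at this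
      exact List.disjoint_iff_ne.mpr this.2.2
    simp only [Finset.mem_compl, valleySet, List.mem_toFinset]
    constructor
    · intro hz hz'
      exact hdisj hz' hz
    · intro hz
      rcases hzL with h' | h'
      · exact absurd h' hz
      · exact h'
  have sort2 : ((valleySet κ σ)ᶜ).sort (· ≤ ·) = (List.ofFn σ).drop κ := by
    rw [← hdropFS]
    refine (List.toFinset_sort _ ?_).mpr ?_
    · exact (List.drop_sublist _ _).nodup hnd
    · exact (drop_sorted_of_valley h).imp (fun hab => le_of_lt hab)
  rw [sort1, sort2, List.reverse_reverse, List.take_append_drop]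

lemma valleySet_mem_powersetCard {κ : ℕ} (hκ : κ ≤ m) {σ : Equiv.Perm (Fin (m + 1))}
    (h : IsValley (m + 1) κ σ) :
    valleySet κ σ ∈ Finset.powersetCard κ (Finset.univ \ {0}) := by
  rw [Finset.mem_powersetCard]
  refine ⟨fun z hz => ?_, card_valleySet hκ σ⟩
  rw [Finset.mem_sdiff, Finset.mem_singleton]
  exact ⟨Finset.mem_univ z, fun h0 => zero_not_mem_valleySet hκ h (h0 ▸ hz)⟩

lemma valley_inj {κ : ℕ} (hκ : κ ≤ m) {σ₁ σ₂ : Equiv.Perm (Fin (m + 1))}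
    (h₁ : IsValley (m + 1) κ σ₁) (h₂ : IsValley (m + 1) κ σ₂)
    (he : valleySet κ σ₁ = valleySet κ σ₂) : σ₁ = σ₂ := by
  have := ofFn_valley_eq hκ h₁
  rw [he, ← ofFn_valley_eq hκ h₂] at this
  exact Equiv.coe_fn_injective (List.ofFn_injective this)

lemma valley_surj {κ : ℕ} (hκ : κ ≤ m) {S : Finset (Fin (m + 1))}
    (hS : S ∈ Finset.powersetCard κ (Finset.univ \ {0})) :
    ∃ σ : Equiv.Perm (Fin (m + 1)), IsValley (m + 1) κ σ ∧ valleySet κ σ = S := by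
  rw [Finset.mem_powersetCard] at hS
  obtain ⟨hSsub, hScard⟩ := hS
  have hzS : (0 : Fin (m + 1)) ∉ S := by
    intro h0
    have := hSsub h0
    rw [Finset.mem_sdiff, Finset.mem_singleton] at this
    exact this.2 rfl
  set u : List (Fin (m + 1)) := (S.sort (· ≤ ·)).reverse with hu
  set v : List (Fin (m + 1)) := Sᶜ.sort (· ≤ ·) with hv
  have hlenu : u.length = κ := by simp [hu, hScard]
  have hlenv : v.length = m + 1 - κ := by
    simp [hv, Finset.card_compl, hScard]
  have hlen : (u ++ v).length = m + 1 := by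
    rw [List.length_append, hlenu, hlenv]; omega
  have hnodup : (u ++ v).Nodup := by
    rw [List.nodup_append]
    refine ⟨List.nodup_reverse.mpr (Finset.sort_nodup _ _), Finset.sort_nodup _ _, ?_⟩
    intro z hz w hz' hzw
    subst hzw
    rw [hu, List.mem_reverse, Finset.mem_sort] at hz
    rw [hv, Finset.mem_sort, Finset.mem_compl] at hz'
    exact hz' hz
  have hf : ∀ i : Fin (m + 1), (i : ℕ) < (u ++ v).length := fun i => by
    rw [hlen]; exact i.isLt
  set f : Fin (m + 1) → Fin (m + 1) := fun i => (u ++ v)[(i : ℕ)]'(hf i) with hfdef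
  have hinj : Function.Injective f := by
    intro i j hij
    have := List.nodup_iff_injective_get.mp hnodup
      (a₁ := ⟨(i : ℕ), hf i⟩) (a₂ := ⟨(j : ℕ), hf j⟩) (by simpa [List.get_eq_getElem] using hij)
    exact Fin.ext (by simpa using this)
  set σ : Equiv.Perm (Fin (m + 1)) := Equiv.ofBijective f (Finite.injective_iff_bijective.mp hinj)
    with hσ
  have hofFn : List.ofFn ⇑σ = u ++ v := by
    refine List.ext_getElem (by simp [hlen]) ?_
    intro i h1 h2
    simp only [List.getElem_ofFn]
    rfl
  have hv0 : v = 0 :: ((Sᶜ.erase 0).sort (· ≤ ·)) := by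
    have h' : (insert 0 (Sᶜ.erase 0)).sort (· ≤ ·) = 0 :: ((Sᶜ.erase 0).sort (· ≤ ·)) :=
      Finset.sort_insert _ (fun b _ => Fin.zero_le b) (Finset.notMem_erase _ _)
    rw [Finset.insert_erase (Finset.mem_compl.mpr hzS)] at h'
    rw [hv]; exact h'
  have husort : u.Pairwise (· > ·) := by
    rw [hu, List.pairwise_reverse]
    exact (Finset.sortedLT_sort S).pairwise
  have hvalley : IsValley (m + 1) κ σ := by
    refine isValley_of_sorted (by omega) ?_ ?_
    · have h1 : κ + 1 - κ = 1 := by omega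
      rw [hofFn, List.take_append, List.take_of_length_le (by omega), hlenu, h1,
        hv0]
      simp only [List.take_succ_cons, List.take_zero]
      rw [List.pairwise_append]
      refine ⟨husort, List.pairwise_singleton _ _, ?_⟩
      intro z hz w hw
      rw [List.mem_singleton] at hw
      subst hw
      rw [hu, List.mem_reverse, Finset.mem_sort] at hz
      exact Fin.pos_of_ne_zero (fun h0 => hzS (h0 ▸ hz))
    · rw [hofFn, List.drop_left' hlenu]
      exact (Finset.sortedLT_sort _).pairwise
  refine ⟨σ, hvalley, ?_⟩
  rw [valleySet, hofFn, List.take_left' hlenu]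
  ext z
  rw [List.mem_toFinset, hu, List.mem_reverse, Finset.mem_sort]

end ValleyFin



/-- Dynkin-type expansion of a left-normed Lie commutator in an associative ℤ-algebra:
`[a₁,…,a_n] = Σ_{κ=0}^{n-1} Σ_{σ ∈ S_{n,κ}} (−1)^κ a_{σ(1)} ⋯ a_{σ(n)}`. -/
theorem leftNormed_commutator_expansion {A : Type*} [Ring A] [Algebra ℤ A]
    (n : ℕ) (hn : 2 ≤ n) (a : Fin n → A) :
    lieList (List.ofFn a) =
      ∑ κ ∈ Finset.range n, ∑ σ : Equiv.Perm (Fin n),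
        if IsValley n κ σ then ((-1 : ℤ) ^ κ) • (List.ofFn fun i => a (σ i)).prod else 0 := by
  obtain ⟨m, rfl⟩ : ∃ m, n = m + 1 := ⟨n - 1, by omega⟩
  set g : Finset (Fin (m + 1)) → A := fun S => ((-1 : ℤ) ^ S.card) •
    (((S.sort (· ≤ ·)).reverse ++ (Sᶜ.sort (· ≤ ·))).map a).prod with hg
  have hT : (Finset.univ \ ({0} : Finset (Fin (m + 1)))).card = m := by
    rw [Finset.card_sdiff_of_subset (by simp)]
    simp
  have step1 : lieList (List.ofFn a) =
      ∑ S ∈ (Finset.univ \ ({0} : Finset (Fin (m + 1)))).powerset, g S := by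
    set l : List (Fin (m + 1)) := List.ofFn (fun i : Fin m => Fin.succ i) with hldef
    have h1 : List.ofFn a = ((0 : Fin (m + 1)) :: l).map a := by
      simp only [hldef, List.ofFn_eq_map, List.finRange_succ]
    have hx : ∀ y ∈ l, (0 : Fin (m + 1)) < y := by
      intro y hy
      rw [hldef, List.mem_ofFn] at hy
      obtain ⟨i, rfl⟩ := hy
      exact Fin.succ_pos i
    have hl : l.Pairwise (· < ·) := by
      rw [hldef, List.ofFn_eq_map, List.pairwise_map]
      exact (List.pairwise_lt_finRange m).imp (fun h => Fin.succ_lt_succ_iff.mpr h)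
    have hTl : l.toFinset = Finset.univ \ {0} := by
      ext z
      simp only [hldef, List.mem_toFinset, List.mem_ofFn, Set.mem_range, Finset.mem_sdiff,
        Finset.mem_univ, Finset.mem_singleton, true_and]
      constructor
      · rintro ⟨i, rfl⟩
        exact Fin.succ_ne_zero i
      · intro hz
        exact Fin.exists_succ_eq.mpr hz
    rw [h1, key_expansion a 0 l hx hl, hTl]
    apply Finset.sum_congr rfl
    intro S hS
    have h0S : (0 : Fin (m + 1)) ∉ S := by
      intro h0
      have := Finset.mem_powerset.mp hS h0
      rw [Finset.mem_sdiff, Finset.mem_singleton] at this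
      exact this.2 rfl
    have hins : insert 0 ((Finset.univ \ {0}) \ S) = Sᶜ := by
      ext z
      simp only [Finset.mem_insert, Finset.mem_sdiff, Finset.mem_univ, Finset.mem_singleton,
        true_and, Finset.mem_compl]
      constructor
      · rintro (rfl | ⟨hz1, hz2⟩)
        · exact h0S
        · exact hz2
      · intro hz
        by_cases hz0 : z = 0
        · exact Or.inl hz0
        · exact Or.inr ⟨hz0, hz⟩
    rw [hins, hg]
  rw [step1, Finset.sum_powerset, hT]
  apply Finset.sum_congr rfl
  intro κ hκmem
  have hκ : κ ≤ m := by
    rw [Finset.mem_range] at hκmem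
    omega
  rw [← Finset.sum_filter]
  symm
  refine Finset.sum_bij (fun σ _ => valleySet κ σ) ?_ ?_ ?_ ?_
  · intro σ hσ
    exact valleySet_mem_powersetCard hκ ((Finset.mem_filter.mp hσ).2)
  · intro σ₁ h₁ σ₂ h₂ he
    exact valley_inj hκ ((Finset.mem_filter.mp h₁).2) ((Finset.mem_filter.mp h₂).2) he
  · intro S hS
    obtain ⟨σ, hv, hvs⟩ := valley_surj hκ hS
    exact ⟨σ, Finset.mem_filter.mpr ⟨Finset.mem_univ _, hv⟩, hvs⟩
  · intro σ hσ
    have hv := (Finset.mem_filter.mp hσ).2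
    simp only [hg]
    rw [card_valleySet hκ σ]
    congr 1
    have h2 : (List.ofFn ⇑σ).map a = List.ofFn fun i => a (σ i) := by
      rw [List.map_ofFn]
      rfl
    rw [← h2, ← ofFn_valley_eq hκ hv]
end

section
/- In any Lie algebra, for elements a, b, c₁, …, c_r one has [a, b, c₁, …, c_r] = Σ_{i=0}^{r} Σ_{σ ∈ K_i} [[a, c_{σ(1)}, …, c_{σ(i)}], [b, c_{σ(i+1)}, …, c_{σ(r)}]], where K_i is the set of permutations σ of {1, …, r} with σ(1) < ⋯ < σ(i) and σ(i+1) < ⋯ < σ(r). -/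
open scoped Classical

/-- `σ ∈ K_i` (0-indexed): `σ` is strictly increasing on the first `i` positions and
strictly increasing on the remaining positions, i.e. an `(i, r−i)`-shuffle. -/
def IsShuffle (r i : ℕ) (σ : Equiv.Perm (Fin r)) : Prop :=
  (∀ j k : Fin r, j < k → (k : ℕ) < i → σ j < σ k) ∧
  (∀ j k : Fin r, j < k → i ≤ (j : ℕ) → σ j < σ k)

section helpers

variable {L : Type*} [LieRing L]

lemma leftNormed_append (x : L) (l : List L) (y : L) :
    leftNormed x (l ++ [y]) = ⁅leftNormed x l, y⁆ := by
  simp [leftNormed, List.foldl_append]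

lemma sort_map_castSucc {r : ℕ} (S : Finset (Fin r)) :
    (S.map Fin.castSuccEmb).sort (· ≤ ·) = (S.sort (· ≤ ·)).map Fin.castSucc := by
  refine (fun hp h1 h2 => List.Perm.eq_of_pairwise' h1 h2 hp) ?_ (Finset.pairwise_sort _ _) ?_
  · rw [← Multiset.coe_eq_coe]
    rw [Finset.sort_eq, Finset.map_val, ← Multiset.map_coe, Finset.sort_eq]
    rfl
  · refine List.Pairwise.map _ (fun a b hab => ?_) (Finset.pairwise_sort S (· ≤ ·))
    simpa using hab

lemma sort_insert_last {r : ℕ} (S : Finset (Fin (r + 1))) (h : Fin.last r ∉ S) :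
    (insert (Fin.last r) S).sort (· ≤ ·) = S.sort (· ≤ ·) ++ [Fin.last r] := by
  refine ((fun hp h1 h2 => List.Perm.eq_of_pairwise' h1 h2 hp) ?_ ?_ (Finset.pairwise_sort _ _)).symm
  · rw [← Multiset.coe_eq_coe]
    rw [Finset.sort_eq, Finset.insert_val_of_notMem h, ← Finset.sort_eq S (· ≤ ·),
      Multiset.cons_coe, Multiset.coe_eq_coe]
    exact List.perm_append_singleton _ _
  · rw [List.pairwise_append]
    refine ⟨Finset.pairwise_sort _ _, by simp, fun x hx y hy => ?_⟩
    simp at hy; subst hy; exact Fin.le_last x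

lemma castSuccEmb_apply {r : ℕ} (y : Fin r) : Fin.castSuccEmb y = y.castSucc := rfl

lemma mem_map_castSucc {r : ℕ} (S : Finset (Fin r)) (y : Fin r) :
    y.castSucc ∈ S.map Fin.castSuccEmb ↔ y ∈ S := by
  rw [show y.castSucc = Fin.castSuccEmb y from rfl]
  exact Finset.mem_map' _

lemma last_not_mem_map_castSucc {r : ℕ} (S : Finset (Fin r)) :
    Fin.last r ∉ S.map Fin.castSuccEmb := by
  intro hmem
  rcases Finset.mem_map.mp hmem with ⟨y, _, hy⟩
  exact (Fin.castSucc_lt_last y).ne hy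

lemma compl_map_castSucc {r : ℕ} (S : Finset (Fin r)) :
    (S.map Fin.castSuccEmb)ᶜ = insert (Fin.last r) (Sᶜ.map Fin.castSuccEmb) := by
  ext x
  refine Fin.lastCases ?_ (fun y => ?_) x
  · simp only [Finset.mem_compl]
    exact iff_of_true (last_not_mem_map_castSucc S) (Finset.mem_insert_self _ _)
  · rw [Finset.mem_compl, mem_map_castSucc, Finset.mem_insert, mem_map_castSucc,
      Finset.mem_compl]
    simp [(Fin.castSucc_lt_last y).ne]

/-- The term attached to a subset `S`. -/
noncomputable def shufTerm (a b : L) {r : ℕ} (c : Fin r → L) (S : Finset (Fin r)) : L :=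
  ⁅leftNormed a ((S.sort (· ≤ ·)).map c), leftNormed b ((Sᶜ.sort (· ≤ ·)).map c)⁆

lemma sum_powerset_map {α β M : Type*} [AddCommMonoid M] (f : α ↪ β) (s : Finset α)
    (g : Finset β → M) :
    ∑ T ∈ (s.map f).powerset, g T = ∑ S ∈ s.powerset, g (S.map f) := by
  refine (Finset.sum_nbij' (fun S => S.map f) (fun T => T.preimage f f.injective.injOn)
    ?_ ?_ ?_ ?_ ?_).symm
  · intro S hS
    rw [Finset.mem_powerset] at hS ⊢
    exact Finset.map_subset_map.mpr hS
  · intro T hT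
    rw [Finset.mem_powerset] at hT ⊢
    rcases Finset.subset_map_iff.mp hT with ⟨u, hu, rfl⟩
    simpa [Finset.preimage_map] using hu
  · intro S _
    simp [Finset.preimage_map]
  · intro T hT
    rw [Finset.mem_powerset] at hT
    rcases Finset.subset_map_iff.mp hT with ⟨u, hu, rfl⟩
    simp [Finset.preimage_map]
  · intro S _
    rfl

lemma lemB (a b : L) : ∀ (r : ℕ) (c : Fin r → L),
    leftNormed ⁅a, b⁆ (List.ofFn c) = ∑ S : Finset (Fin r), shufTerm a b c S := by
  intro r
  induction r with
  | zero =>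
    intro c
    have h0 : ∀ S : Finset (Fin 0), S = ∅ := fun S => Finset.eq_empty_of_isEmpty S
    have : (Finset.univ : Finset (Finset (Fin 0))) = {∅} := by
      ext S; simp [h0 S, h0 default]
    rw [this, Finset.sum_singleton]
    simp [shufTerm, leftNormed, h0 ∅ᶜ]
  | succ r ih =>
    intro c
    have hl : List.ofFn c = (List.ofFn fun i : Fin r => c i.castSucc) ++ [c (Fin.last r)] := by
      rw [List.ofFn_succ']; simp
    rw [hl, leftNormed_append, ih (fun i => c i.castSucc)]
    have hsum : ⁅∑ S : Finset (Fin r), shufTerm a b (fun i => c i.castSucc) S, c (Fin.last r)⁆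
        = ∑ S : Finset (Fin r), ⁅shufTerm a b (fun i => c i.castSucc) S, c (Fin.last r)⁆ :=
      map_sum (AddMonoidHom.mk' (fun x : L => ⁅x, c (Fin.last r)⁆)
        (fun u v => add_lie u v (c (Fin.last r)))) _ _
    rw [hsum]
    have key : ∀ S : Finset (Fin r),
        ⁅shufTerm a b (fun i => c i.castSucc) S, c (Fin.last r)⁆ =
          shufTerm a b c (S.map Fin.castSuccEmb) +
          shufTerm a b c (insert (Fin.last r) (S.map Fin.castSuccEmb)) := by
      intro S
      have h1 : List.map c ((S.map Fin.castSuccEmb).sort (· ≤ ·))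
          = (S.sort (· ≤ ·)).map (fun i => c i.castSucc) := by
        rw [sort_map_castSucc, List.map_map]; rfl
      have h2 : List.map c (((S.map Fin.castSuccEmb)ᶜ).sort (· ≤ ·))
          = ((Sᶜ.sort (· ≤ ·)).map (fun i => c i.castSucc)) ++ [c (Fin.last r)] := by
        rw [compl_map_castSucc, sort_insert_last _ (last_not_mem_map_castSucc _),
          List.map_append, sort_map_castSucc, List.map_map]
        rfl
      have h3 : ((insert (Fin.last r) (S.map Fin.castSuccEmb)).sort (· ≤ ·)).map c
          = ((S.sort (· ≤ ·)).map (fun i => c i.castSucc)) ++ [c (Fin.last r)] := by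
        rw [sort_insert_last _ (last_not_mem_map_castSucc _), List.map_append,
          sort_map_castSucc, List.map_map]
        rfl
      have h4 : List.map c (((insert (Fin.last r) (S.map Fin.castSuccEmb))ᶜ).sort (· ≤ ·))
          = (Sᶜ.sort (· ≤ ·)).map (fun i => c i.castSucc) := by
        rw [Finset.compl_insert, compl_map_castSucc,
          Finset.erase_insert (last_not_mem_map_castSucc _), sort_map_castSucc, List.map_map]
        rfl
      simp only [shufTerm, h1, h2, h3, h4, leftNormed_append]
      rw [lie_lie, sub_eq_add_neg, lie_skew]
    rw [Finset.sum_congr rfl (fun S _ => key S), Finset.sum_add_distrib]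
    -- now the RHS side
    conv_rhs => rw [← Finset.powerset_univ, Fin.univ_castSuccEmb, Finset.cons_eq_insert]
    rw [Finset.sum_powerset_insert (last_not_mem_map_castSucc _), sum_powerset_map,
      sum_powerset_map, Finset.powerset_univ]

lemma card_add_card_compl_fin {r : ℕ} (S : Finset (Fin r)) : S.card + Sᶜ.card = r := by
  rw [Finset.card_add_card_compl, Fintype.card_fin]

/-- The shuffle associated to a subset `S`: the first `S.card` positions enumerate `S`
increasingly, the rest enumerate `Sᶜ` increasingly. -/
noncomputable def shuffleOf {r : ℕ} (S : Finset (Fin r)) : Equiv.Perm (Fin r) :=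
  ((finCongr (card_add_card_compl_fin S)).symm.trans finSumFinEquiv.symm).trans <|
    (Equiv.sumCongr (S.orderIsoOfFin rfl).toEquiv (Sᶜ.orderIsoOfFin rfl).toEquiv).trans <|
      (Equiv.sumCongr (Equiv.refl _) (Equiv.subtypeEquivRight fun x => Finset.mem_compl)).trans
        (Equiv.sumCompl (· ∈ S))

lemma shuffleOf_apply_lt {r : ℕ} (S : Finset (Fin r)) (j : Fin r) (hj : (j : ℕ) < S.card) :
    shuffleOf S j = S.orderEmbOfFin rfl ⟨j, hj⟩ := by
  have h1 : (finCongr (card_add_card_compl_fin S)).symm j = Fin.castAdd Sᶜ.card ⟨j, hj⟩ := by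
    ext; simp
  simp only [shuffleOf, Equiv.trans_apply, h1, finSumFinEquiv_symm_apply_castAdd,
    Equiv.sumCongr_apply, Sum.map_inl, Equiv.refl_apply, Equiv.sumCompl_apply_inl]
  rfl

lemma shuffleOf_apply_ge {r : ℕ} (S : Finset (Fin r)) (j : Fin r) (hj : S.card ≤ (j : ℕ)) :
    shuffleOf S j = Sᶜ.orderEmbOfFin rfl
      ⟨(j : ℕ) - S.card, by have := card_add_card_compl_fin S; omega⟩ := by
  have hj2 : (j : ℕ) < S.card + Sᶜ.card := by rw [card_add_card_compl_fin S]; exact j.2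
  have h1 : (finCongr (card_add_card_compl_fin S)).symm j
      = Fin.natAdd S.card ⟨(j : ℕ) - S.card, by omega⟩ := by
    ext; simp; omega
  simp only [shuffleOf, Equiv.trans_apply, h1, finSumFinEquiv_symm_apply_natAdd,
    Equiv.sumCongr_apply, Sum.map_inr, Equiv.sumCompl_apply_inr]
  rfl

lemma shuffleOf_isShuffle {r : ℕ} (S : Finset (Fin r)) : IsShuffle r S.card (shuffleOf S) := by
  constructor
  · intro j k hjk hk
    have hj : (j : ℕ) < S.card := lt_trans hjk hk
    rw [shuffleOf_apply_lt S j hj, shuffleOf_apply_lt S k hk]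
    exact (S.orderEmbOfFin rfl).strictMono (by exact hjk)
  · intro j k hjk hj
    have hk : S.card ≤ (k : ℕ) := le_trans hj (le_of_lt hjk)
    rw [shuffleOf_apply_ge S j hj, shuffleOf_apply_ge S k hk]
    exact (Sᶜ.orderEmbOfFin rfl).strictMono (by simp only [Fin.mk_lt_mk]; omega)

lemma image_shuffleOf {r i : ℕ} (hi : i ≤ r) (S : Finset (Fin r)) (hc : S.card = i) :
    (Finset.univ : Finset (Fin i)).image (fun j => shuffleOf S (Fin.castLE hi j)) = S := by
  subst hc
  ext x
  simp only [Finset.mem_image, Finset.mem_univ, true_and]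
  constructor
  · rintro ⟨j, rfl⟩
    rw [shuffleOf_apply_lt S _ (by simpa using j.2)]
    exact Finset.orderEmbOfFin_mem _ _ _
  · intro hx
    have : x ∈ Set.range (S.orderEmbOfFin rfl) := by
      rw [Finset.range_orderEmbOfFin]; exact hx
    rcases this with ⟨j, hj⟩
    refine ⟨⟨j, j.2⟩, ?_⟩
    rw [shuffleOf_apply_lt S _ (by simpa using j.2), ← hj]
    exact Finset.orderEmbOfFin_eq_orderEmbOfFin_iff.mpr (by simp)

lemma shuffle_eq_shuffleOf {r i : ℕ} (hi : i ≤ r) (σ : Equiv.Perm (Fin r))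
    (h : IsShuffle r i σ) :
    σ = shuffleOf ((Finset.univ : Finset (Fin i)).image (fun j => σ (Fin.castLE hi j))) := by
  set S := (Finset.univ : Finset (Fin i)).image (fun j => σ (Fin.castLE hi j)) with hS
  have hinj : Function.Injective (fun j : Fin i => σ (Fin.castLE hi j)) :=
    fun u v huv => by
      have := σ.injective huv
      exact Fin.castLE_injective hi this
  have hcard : S.card = i := by
    rw [hS, Finset.card_image_of_injective _ hinj, Finset.card_univ, Fintype.card_fin]
  have hcc : Sᶜ.card = r - i := by
    have := card_add_card_compl_fin S; omega
  -- first block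
  have hf : (fun j : Fin i => σ (Fin.castLE hi j)) = S.orderEmbOfFin hcard := by
    refine Finset.orderEmbOfFin_unique hcard (fun x => ?_) (fun u v huv => ?_)
    · exact Finset.mem_image_of_mem _ (Finset.mem_univ x)
    · exact h.1 _ _ (by exact huv) (by simpa using v.2)
  -- second block
  have hg : (fun k : Fin (r - i) => σ ⟨i + (k : ℕ), by omega⟩) = Sᶜ.orderEmbOfFin hcc := by
    refine Finset.orderEmbOfFin_unique hcc (fun x => ?_) (fun u v huv => ?_)
    · rw [Finset.mem_compl]
      intro hmem
      rcases Finset.mem_image.mp hmem with ⟨j, -, hj⟩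
      have h2 := σ.injective hj
      have h3 : ((Fin.castLE hi j : Fin r) : ℕ) = i + (x : ℕ) := by rw [h2]
      have hj2 := j.2
      simp only [Fin.coe_castLE] at h3
      omega
    · exact h.2 _ _ (by simp only [Fin.mk_lt_mk]; omega) (by simp)
  refine Equiv.ext fun j => ?_
  rcases lt_or_ge (j : ℕ) i with hj | hj
  · have e1 : σ j = σ (Fin.castLE hi ⟨(j : ℕ), hj⟩) := rfl
    have e2 := congrFun hf ⟨(j : ℕ), hj⟩
    rw [e1, shuffleOf_apply_lt S j (by omega)]
    exact e2.trans (Finset.orderEmbOfFin_eq_orderEmbOfFin_iff.mpr rfl)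
  · have hjr := j.2
    have e1 : σ j = σ ⟨i + ((j : ℕ) - i), by omega⟩ := by congr 1; ext; simp; omega
    have e2 := congrFun hg ⟨(j : ℕ) - i, by omega⟩
    rw [e1, shuffleOf_apply_ge S j (by omega)]
    exact e2.trans (Finset.orderEmbOfFin_eq_orderEmbOfFin_iff.mpr (by simp; omega))

lemma sort_eq_ofFn {α : Type*} [LinearOrder α] (S : Finset α) :
    S.sort (· ≤ ·) = List.ofFn (fun j : Fin S.card => S.orderEmbOfFin rfl j) := by
  refine List.ext_getElem (by simp) (fun n h1 h2 => ?_)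
  simp [Finset.orderEmbOfFin_apply]

lemma take_shuffleOf {α : Type*} {r i : ℕ} (hi : i ≤ r) (S : Finset (Fin r)) (hc : S.card = i)
    (c : Fin r → α) :
    (List.ofFn fun j => c (shuffleOf S j)).take i = (S.sort (· ≤ ·)).map c := by
  subst hc
  rw [← Fin.ofFn_take_eq_take_ofFn hi, sort_eq_ofFn, List.map_ofFn]
  congr 1
  funext j
  show c (shuffleOf S (Fin.castLE hi j)) = c (S.orderEmbOfFin rfl j)
  congr 1
  rw [shuffleOf_apply_lt S _ (by simpa using j.2)]
  exact Finset.orderEmbOfFin_eq_orderEmbOfFin_iff.mpr (by simp)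

lemma drop_shuffleOf {α : Type*} {r i : ℕ} (hi : i ≤ r) (S : Finset (Fin r)) (hc : S.card = i)
    (c : Fin r → α) :
    (List.ofFn fun j => c (shuffleOf S j)).drop i = (Sᶜ.sort (· ≤ ·)).map c := by
  subst hc
  have hcc := card_add_card_compl_fin S
  refine List.ext_getElem ?_ (fun n h1 h2 => ?_)
  · simp; omega
  · have h1' : S.card + n < r := by simp at h1; omega
    rw [List.getElem_drop, List.getElem_map, List.getElem_ofFn]
    congr 1
    rw [shuffleOf_apply_ge S ⟨S.card + n, by simpa using h1'⟩ (by simp)]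
    have hn : n < Sᶜ.card := by simpa using h2
    have e3 := Finset.orderEmbOfFin_apply Sᶜ rfl ⟨n, hn⟩
    simp only [Fin.getElem_fin] at e3
    rw [← e3]
    exact Finset.orderEmbOfFin_eq_orderEmbOfFin_iff.mpr (by simp)

lemma lemA (a b : L) (r : ℕ) (c : Fin r → L) :
    ∑ i ∈ Finset.range (r + 1), ∑ σ : Equiv.Perm (Fin r),
        (if IsShuffle r i σ then
          ⁅leftNormed a ((List.ofFn fun j => c (σ j)).take i),
            leftNormed b ((List.ofFn fun j => c (σ j)).drop i)⁆
        else 0)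
      = ∑ S : Finset (Fin r), shufTerm a b c S := by
  have hsplit : ∑ S : Finset (Fin r), shufTerm a b c S
      = ∑ i ∈ Finset.range (r + 1), ∑ S ∈ Finset.powersetCard i (Finset.univ : Finset (Fin r)),
          shufTerm a b c S := by
    conv_lhs => rw [← Finset.powerset_univ, Finset.sum_powerset]
    congr 1
    simp
  rw [hsplit]
  refine Finset.sum_congr rfl fun i hi => ?_
  have hir : i ≤ r := by simp at hi; omega
  rw [← Finset.sum_filter]
  refine Finset.sum_nbij'
    (fun σ => (Finset.univ : Finset (Fin i)).image (fun j => σ (Fin.castLE hir j)))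
    (fun S => shuffleOf S) ?_ ?_ ?_ ?_ ?_
  · intro σ hσ
    rw [Finset.mem_powersetCard]
    refine ⟨Finset.subset_univ _, ?_⟩
    rw [Finset.card_image_of_injective _
      (fun u v huv => Fin.castLE_injective hir (σ.injective huv)),
      Finset.card_univ, Fintype.card_fin]
  · intro S hS
    rw [Finset.mem_powersetCard] at hS
    rw [Finset.mem_filter]
    exact ⟨Finset.mem_univ _, hS.2 ▸ shuffleOf_isShuffle S⟩
  · intro σ hσ
    rw [Finset.mem_filter] at hσ
    exact (shuffle_eq_shuffleOf hir σ hσ.2).symm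
  · intro S hS
    rw [Finset.mem_powersetCard] at hS
    exact image_shuffleOf hir S hS.2
  · intro σ hσ
    rw [Finset.mem_filter] at hσ
    have hσS := shuffle_eq_shuffleOf hir σ hσ.2
    have hc : ((Finset.univ : Finset (Fin i)).image (fun j => σ (Fin.castLE hir j))).card = i := by
      rw [Finset.card_image_of_injective _
        (fun u v huv => Fin.castLE_injective hir (σ.injective huv)),
        Finset.card_univ, Fintype.card_fin]
    conv_lhs => rw [hσS]
    rw [take_shuffleOf hir _ hc, drop_shuffleOf hir _ hc]
    rfl

end helpers

/-- In any Lie algebra,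
`[a, b, c₁, …, c_r] = Σ_{i=0}^{r} Σ_{σ ∈ K_i} [[a, c_{σ(1)}, …, c_{σ(i)}], [b, c_{σ(i+1)}, …, c_{σ(r)}]]`. -/
theorem leftNormed_bracket_shuffle_expansion {L : Type*} [LieRing L] [LieAlgebra ℤ L]
    (a b : L) (r : ℕ) (c : Fin r → L) :
    leftNormed ⁅a, b⁆ (List.ofFn c) =
      ∑ i ∈ Finset.range (r + 1), ∑ σ : Equiv.Perm (Fin r),
        if IsShuffle r i σ then
          ⁅leftNormed a ((List.ofFn fun j => c (σ j)).take i),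
            leftNormed b ((List.ofFn fun j => c (σ j)).drop i)⁆
        else 0 := by
  rw [lemB a b r c, ← lemA a b r c]
end

section
/- Let B be a finite set, L(B) the free Lie algebra over ℤ on B, and T(B) its universal enveloping algebra (the free associative ℤ-algebra on B). Let M be a totally ordered ℤ-basis of L(B). For each nondecreasing product u = v₁v₂⋯v_κ (v_i ∈ M, v₁ ≤ ⋯ ≤ v_κ, κ ≥ 0) choose an arbitrary rearrangement u′ = v_{π(1)}⋯v_{π(κ)}. Then the set {u′ : u ∈ M^<} of all chosen rearrangements is a ℤ-basis of T(B). -/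
attribute [local instance 100] LieRing.ofAssociativeRing

/-- The canonical (injective) Lie algebra map from the free Lie algebra on `B` into the
free associative ℤ-algebra `T(B)`, its universal enveloping algebra. -/
noncomputable def freeLieToFreeAssoc (B : Type*) :
    FreeLieAlgebra ℤ B →ₗ⁅ℤ⁆ FreeAlgebra ℤ B :=
  FreeLieAlgebra.lift ℤ (FreeAlgebra.ι ℤ)

namespace PBWAux

open List

variable {B : Type*} {ι : Type*} [LinearOrder ι]

abbrev S (ι : Type*) [LinearOrder ι] := {l : List ι // l.Pairwise (· ≤ ·)}
abbrev V (ι : Type*) [LinearOrder ι] := S ι →₀ ℤ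

noncomputable def e (l : S ι) : V ι := Finsupp.single l 1

lemma sorted_cons_cons {i j : ι} {l : List ι} (hij : i ≤ j) (h : (j :: l).Pairwise (· ≤ ·)) :
    (i :: j :: l).Pairwise (· ≤ ·) := by
  rw [List.pairwise_cons]
  refine ⟨?_, h⟩
  intro x hx
  rcases List.mem_cons.mp hx with rfl | hx
  · exact hij
  · exact hij.trans ((List.pairwise_cons.mp h).1 x hx)

def insS (j : ι) (m : S ι) : S ι :=
  ⟨m.1.orderedInsert (· ≤ ·) j, m.2.orderedInsert j m.1⟩

@[simp] lemma length_insS (j : ι) (m : S ι) : (insS j m).1.length = m.1.length + 1 :=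
  List.orderedInsert_length _ m.1 j

lemma orderedInsert_of_forall_le {j : ι} {m : List ι} (h : ∀ x ∈ m, j ≤ x) :
    m.orderedInsert (· ≤ ·) j = j :: m := by
  cases m with
  | nil => rfl
  | cons a t => exact List.orderedInsert_cons_of_le (· ≤ ·) t (h a (List.mem_cons_self))

lemma insS_eq_cons {j : ι} {m : S ι} (h : ∀ x ∈ m.1, j ≤ x)
    (hs : (j :: m.1).Pairwise (· ≤ ·)) : insS j m = ⟨j :: m.1, hs⟩ :=
  Subtype.ext (orderedInsert_of_forall_le h)

noncomputable def E (j : ι) : V ι →ₗ[ℤ] V ι := Finsupp.lmapDomain ℤ ℤ (insS j)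

@[simp] lemma E_single (j : ι) (m : S ι) : E j (e m) = e (insS j m) := by
  simp [E, e, Finsupp.mapDomain_single]

variable (b : Module.Basis ι ℤ (FreeLieAlgebra ℤ B))

noncomputable def gAux : ℕ → ι → (l : List ι) → l.Pairwise (· ≤ ·) → V ι
  | _, i, [], _ => e ⟨[i], List.pairwise_singleton _ i⟩
  | 0, _, _ :: _, _ => 0
  | n+1, i, j :: l', h =>
    if hij : i ≤ j then e ⟨i :: j :: l', sorted_cons_cons hij h⟩
    else
      let v := gAux n i l' h.of_cons
      E j (v.filter fun m => m.1.length = l'.length + 1)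
      + (v.filter fun m => ¬ (m.1.length = l'.length + 1)).sum
          (fun m c => c • gAux n j m.1 m.2)
      + (b.repr ⁅b i, b j⁆).sum fun k c => c • gAux n k l' h.of_cons

noncomputable def g (i : ι) (l : S ι) : V ι := gAux b l.1.length i l.1 l.2

noncomputable def f (i : ι) : V ι →ₗ[ℤ] V ι :=
  Finsupp.linearCombination ℤ (g b i)

lemma f_e (i : ι) (l : S ι) : f b i (e l) = g b i l := by
  simp [f, e]

lemma gAux_nil (n : ℕ) (i : ι) (h : ([] : List ι).Pairwise (· ≤ ·)) :
    gAux b n i [] h = e ⟨[i], List.pairwise_singleton _ i⟩ := by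
  cases n <;> rfl

lemma gAux_cons_pos (n : ℕ) (i j : ι) (l' : List ι) (h : (j :: l').Pairwise (· ≤ ·))
    (hij : i ≤ j) :
    gAux b (n+1) i (j :: l') h = e ⟨i :: j :: l', sorted_cons_cons hij h⟩ := by
  simp only [gAux]
  rw [dif_pos hij]

lemma gAux_cons_neg (n : ℕ) (i j : ι) (l' : List ι) (h : (j :: l').Pairwise (· ≤ ·))
    (hij : ¬ i ≤ j) :
    gAux b (n+1) i (j :: l') h =
      E j ((gAux b n i l' h.of_cons).filter fun m => m.1.length = l'.length + 1)
      + ((gAux b n i l' h.of_cons).filter fun m => ¬ (m.1.length = l'.length + 1)).sum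
          (fun m c => c • gAux b n j m.1 m.2)
      + (b.repr ⁅b i, b j⁆).sum fun k c => c • gAux b n k l' h.of_cons := by
  simp only [gAux]
  rw [dif_neg hij]

/-- filtration of `V` by length. -/
noncomputable def Vle (n : ℕ) : Submodule ℤ (V ι) :=
  Finsupp.supported ℤ ℤ {m : S ι | m.1.length ≤ n}

lemma mem_Vle {v : V ι} {n : ℕ} : v ∈ Vle (ι := ι) n ↔ ∀ m : S ι, ¬ m.1.length ≤ n → v m = 0 :=
  Finsupp.mem_supported' _ _

lemma Vle_mono {n n' : ℕ} (h : n ≤ n') : Vle (ι := ι) n ≤ Vle n' :=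
  Finsupp.supported_mono fun m hm => le_trans hm h

lemma e_mem_Vle {m : S ι} {n : ℕ} (h : m.1.length ≤ n) : e m ∈ Vle (ι := ι) n := by
  rw [mem_Vle]
  intro m' hm'
  rw [e, Finsupp.single_apply]
  rw [if_neg]
  rintro rfl; exact hm' h

lemma supp_len_of_mem_Vle {w : V ι} {n : ℕ} (hw : w ∈ Vle n) {m : S ι}
    (hm : m ∈ w.support) : m.1.length ≤ n := by
  by_contra hc
  exact (Finsupp.mem_support_iff.mp hm) (mem_Vle.mp hw m hc)

lemma filter_top_of_mem_Vle {w : V ι} {n : ℕ} (hw : w ∈ Vle n) :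
    (w.filter fun m : S ι => m.1.length = n + 1) = 0 := by
  ext m
  rw [Finsupp.filter_apply, Finsupp.coe_zero, Pi.zero_apply]
  split_ifs with hm
  · exact mem_Vle.mp hw m (by omega)
  · rfl

lemma filter_low_of_mem_Vle {w : V ι} {n : ℕ} (hw : w ∈ Vle n) :
    (w.filter fun m : S ι => ¬ (m.1.length = n + 1)) = w := by
  ext m
  rw [Finsupp.filter_apply]
  by_cases hm : m.1.length = n + 1
  · rw [if_neg (not_not_intro hm)]
    exact (mem_Vle.mp hw m (by omega)).symm
  · rw [if_pos hm]

/-- P1 : the leading term of `gAux` is `e (insS i l)`. -/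
lemma gAux_sub_e_mem : ∀ n (i : ι) (l : List ι) (h : l.Pairwise (· ≤ ·)), l.length ≤ n →
    gAux b n i l h - e (insS i ⟨l, h⟩) ∈ Vle l.length := by
  intro n
  induction n with
  | zero =>
    intro i l h hl
    cases l with
    | nil =>
      rw [gAux_nil]
      have : insS i (⟨[], h⟩ : S ι) = ⟨[i], List.pairwise_singleton _ i⟩ := rfl
      rw [this, sub_self]
      exact Submodule.zero_mem _
    | cons j l' => simp at hl
  | succ n IH =>
    intro i l h hl
    -- useful consequence of IH
    have key : ∀ (i' : ι) (m : S ι), m.1.length ≤ n →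
        gAux b n i' m.1 m.2 ∈ Vle (m.1.length + 1) := by
      intro i' m hm
      have h1 := IH i' m.1 m.2 hm
      have h2 : e (insS i' m) ∈ Vle (ι := ι) (m.1.length + 1) :=
        e_mem_Vle (by rw [length_insS])
      have := Submodule.add_mem _ (Vle_mono (Nat.le_succ _) h1) h2
      simpa using this
    cases l with
    | nil =>
      rw [gAux_nil]
      have : insS i (⟨[], h⟩ : S ι) = ⟨[i], List.pairwise_singleton _ i⟩ := rfl
      rw [this, sub_self]
      exact Submodule.zero_mem _
    | cons j l' =>
      have hl' : l'.length ≤ n := by simpa using hl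
      by_cases hij : i ≤ j
      · rw [gAux_cons_pos b n i j l' h hij]
        have : insS i (⟨j :: l', h⟩ : S ι) = ⟨i :: j :: l', sorted_cons_cons hij h⟩ :=
          Subtype.ext (List.orderedInsert_cons_of_le (· ≤ ·) l' hij)
        rw [this, sub_self]
        exact Submodule.zero_mem _
      · rw [gAux_cons_neg b n i j l' h hij]
        have hji : j ≤ i := le_of_not_ge hij
        have hsc := List.pairwise_cons.mp h
        -- decompose v := gAux b n i l'
        set v := gAux b n i l' h.of_cons with hv
        set w := v - e (insS i ⟨l', h.of_cons⟩) with hwdef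
        have hw : w ∈ Vle l'.length := IH i l' h.of_cons hl'
        have hvw : v = e (insS i ⟨l', h.of_cons⟩) + w := by rw [hwdef]; abel
        -- top filter
        have htop : (v.filter fun m : S ι => m.1.length = l'.length + 1) =
            e (insS i ⟨l', h.of_cons⟩) := by
          rw [hvw, Finsupp.filter_add, filter_top_of_mem_Vle hw, add_zero, e,
            Finsupp.filter_single_of_pos (fun m : S ι => m.1.length = l'.length + 1)
              (length_insS i ⟨l', h.of_cons⟩)]
        have hlow : (v.filter fun m : S ι => ¬ (m.1.length = l'.length + 1)) = w := by
          rw [hvw, Finsupp.filter_add, filter_low_of_mem_Vle hw, e,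
            Finsupp.filter_single_of_neg (fun m : S ι => ¬ (m.1.length = l'.length + 1))
              (not_not_intro (length_insS i ⟨l', h.of_cons⟩)), zero_add]
        rw [htop, hlow, E_single]
        -- identify the leading term
        have hins : insS j (insS i ⟨l', h.of_cons⟩) = insS i ⟨j :: l', h⟩ := by
          apply Subtype.ext
          have h1 : (insS j (insS i ⟨l', h.of_cons⟩)).1 = j :: (insS i ⟨l', h.of_cons⟩).1 := by
            apply orderedInsert_of_forall_le
            intro x hx
            rcases (List.mem_orderedInsert _).mp hx with rfl | hx
            · exact hji
            · exact hsc.1 x hx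
          have h2 : (insS i (⟨j :: l', h⟩ : S ι)).1 = j :: (insS i ⟨l', h.of_cons⟩).1 := by
            show (j :: l').orderedInsert (· ≤ ·) i = _
            rw [List.orderedInsert]
            rw [if_neg hij]
            rfl
          rw [h1, h2]
        rw [hins]
        have hgoal_len : (j :: l').length = l'.length + 1 := rfl
        rw [hgoal_len]
        -- now goal : e (insS i ⟨j::l',h⟩) + wsum + brack - e (insS i ⟨j::l',h⟩) ∈ Vle (l'.length+1)
        have hmem1 : (w.sum fun m c => c • gAux b n j m.1 m.2) ∈ Vle (ι := ι) (l'.length + 1) := by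
          apply Submodule.sum_mem
          intro m hm
          apply Submodule.smul_mem
          have hmlen : m.1.length ≤ l'.length := supp_len_of_mem_Vle hw hm
          exact Vle_mono (by omega) (key j m (le_trans hmlen hl'))
        have hmem2 : ((b.repr ⁅b i, b j⁆).sum fun k c => c • gAux b n k l' h.of_cons) ∈
            Vle (ι := ι) (l'.length + 1) := by
          apply Submodule.sum_mem
          intro k _
          apply Submodule.smul_mem
          exact key k ⟨l', h.of_cons⟩ hl'
        have : e (insS i (⟨j :: l', h⟩ : S ι)) +
            (w.sum fun m c => c • gAux b n j m.1 m.2) +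
            ((b.repr ⁅b i, b j⁆).sum fun k c => c • gAux b n k l' h.of_cons) -
            e (insS i ⟨j :: l', h⟩) =
            (w.sum fun m c => c • gAux b n j m.1 m.2) +
            ((b.repr ⁅b i, b j⁆).sum fun k c => c • gAux b n k l' h.of_cons) := by abel
        rw [this]
        exact Submodule.add_mem _ hmem1 hmem2

lemma gAux_mem_Vle (n : ℕ) (i : ι) (l : List ι) (h : l.Pairwise (· ≤ ·)) (hl : l.length ≤ n) :
    gAux b n i l h ∈ Vle (l.length + 1) := by
  have h1 := gAux_sub_e_mem b n i l h hl
  have h2 : e (insS i ⟨l, h⟩) ∈ Vle (ι := ι) (l.length + 1) :=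
    e_mem_Vle (by rw [length_insS])
  simpa using Submodule.add_mem _ (Vle_mono (Nat.le_succ _) h1) h2

lemma gAux_succ_eq : ∀ n (i : ι) (l : List ι) (h : l.Pairwise (· ≤ ·)), l.length ≤ n →
    gAux b (n+1) i l h = gAux b n i l h := by
  intro n
  induction n with
  | zero =>
    intro i l h hl
    cases l with
    | nil => rw [gAux_nil, gAux_nil]
    | cons j l' => simp at hl
  | succ n IH =>
    intro i l h hl
    cases l with
    | nil => rw [gAux_nil, gAux_nil]
    | cons j l' =>
      have hl' : l'.length ≤ n := by simpa using hl
      by_cases hij : i ≤ j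
      · rw [gAux_cons_pos b (n+1) i j l' h hij, gAux_cons_pos b n i j l' h hij]
      · rw [gAux_cons_neg b (n+1) i j l' h hij, gAux_cons_neg b n i j l' h hij]
        have hv : gAux b (n+1) i l' h.of_cons = gAux b n i l' h.of_cons := IH i l' _ hl'
        rw [hv]
        congr 1
        · congr 1
          apply Finsupp.sum_congr
          intro m hm
          have hm0 : (Finsupp.filter (fun m : S ι => ¬ (m.1.length = l'.length + 1))
              (gAux b n i l' h.of_cons)) m ≠ 0 := Finsupp.mem_support_iff.mp hm
          rw [Finsupp.filter_apply] at hm0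
          by_cases hp : (m.1.length = l'.length + 1)
          · rw [if_neg (not_not_intro hp)] at hm0; exact absurd rfl hm0
          · rw [if_pos hp] at hm0
            have hlen : m.1.length ≤ l'.length + 1 :=
              supp_len_of_mem_Vle (gAux_mem_Vle b n i l' h.of_cons hl')
                (Finsupp.mem_support_iff.mpr hm0)
            have hlen' : m.1.length ≤ l'.length := by omega
            rw [IH j m.1 m.2 (le_trans hlen' hl')]
        · apply Finsupp.sum_congr
          intro k _
          rw [IH k l' h.of_cons hl']

lemma g_def_eq (n : ℕ) (i : ι) (l : S ι) (hn : l.1.length ≤ n) :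
    gAux b n i l.1 l.2 = g b i l := by
  obtain ⟨k, rfl⟩ : ∃ k, n = l.1.length + k := ⟨n - l.1.length, by omega⟩
  clear hn
  induction k with
  | zero => rfl
  | succ k IHk =>
    have : l.1.length + (k+1) = (l.1.length + k) + 1 := rfl
    rw [this, gAux_succ_eq b _ i l.1 l.2 (by omega), IHk]

lemma g_easy (i : ι) (l : S ι) (h : (i :: l.1).Pairwise (· ≤ ·)) :
    g b i l = e ⟨i :: l.1, h⟩ := by
  obtain ⟨lv, hs⟩ := l
  cases lv with
  | nil => rw [show g b i ⟨[], hs⟩ = gAux b 0 i [] hs from rfl, gAux_nil]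
  | cons j l' =>
    have hij : i ≤ j := (List.pairwise_cons.mp h).1 j (List.mem_cons_self)
    rw [show g b i ⟨j :: l', hs⟩ = gAux b (l'.length + 1) i (j :: l') hs from rfl,
      gAux_cons_pos b l'.length i j l' hs hij]

noncomputable def φ : FreeLieAlgebra ℤ B →ₗ[ℤ] (V ι →ₗ[ℤ] V ι) :=
  (Module.Basis.constr b ℤ) (f b)

lemma φ_basis (i : ι) : φ b (b i) = f b i := Module.Basis.constr_basis b ℤ (f b) i

lemma φ_apply_e (x : FreeLieAlgebra ℤ B) (l : S ι) :
    φ b x (e l) = (b.repr x).sum fun k c => c • g b k l := by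
  rw [φ, Module.Basis.constr_apply, LinearMap.finsupp_sum_apply]
  apply Finsupp.sum_congr
  intro k _
  rw [LinearMap.smul_apply, f_e]

lemma f_apply_sum (k : ι) (w : V ι) : f b k w = w.sum fun m c => c • g b k m :=
  Finsupp.linearCombination_apply ℤ w

lemma sorted_cons_of_forall_le {k : ι} {m : List ι} (hs : m.Pairwise (· ≤ ·))
    (h : ∀ x ∈ m, k ≤ x) : (k :: m).Pairwise (· ≤ ·) :=
  List.pairwise_cons.mpr ⟨h, hs⟩

/-- The key unfolding identity (D): for `¬ i ≤ k` and `k :: m` sorted,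
`g i (k :: m) = f k (g i m) + φ ⁅b i, b k⁆ (e m)`. -/
lemma gD (i k : ι) (m : S ι) (hkm : (k :: m.1).Pairwise (· ≤ ·)) (hik : ¬ i ≤ k) :
    g b i ⟨k :: m.1, hkm⟩ = f b k (g b i m) + φ b ⁅b i, b k⁆ (e m) := by
  have hsc := List.pairwise_cons.mp hkm
  have hki : k ≤ i := le_of_not_ge hik
  -- unfold the definition
  have h0 : g b i ⟨k :: m.1, hkm⟩ = gAux b (m.1.length + 1) i (k :: m.1) hkm := rfl
  rw [h0, gAux_cons_neg b m.1.length i k m.1 hkm hik]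
  have hstab : gAux b m.1.length i m.1 hkm.of_cons = g b i m := by
    have := g_def_eq b m.1.length i m le_rfl
    convert this using 2
  rw [hstab]
  -- decompose g b i m
  set v := g b i m with hvdef
  set w := v - e (insS i m) with hwdef
  have hw : w ∈ Vle m.1.length := by
    have := gAux_sub_e_mem b m.1.length i m.1 m.2 le_rfl
    convert this using 2
    rfl
  have hvw : v = e (insS i m) + w := by rw [hwdef]; abel
  have htop : (v.filter fun m' : S ι => m'.1.length = m.1.length + 1) = e (insS i m) := by
    rw [hvw, Finsupp.filter_add, filter_top_of_mem_Vle hw, add_zero, e,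
      Finsupp.filter_single_of_pos (fun m' : S ι => m'.1.length = m.1.length + 1)
        (length_insS i m)]
  have hlow : (v.filter fun m' : S ι => ¬ (m'.1.length = m.1.length + 1)) = w := by
    rw [hvw, Finsupp.filter_add, filter_low_of_mem_Vle hw, e,
      Finsupp.filter_single_of_neg (fun m' : S ι => ¬ (m'.1.length = m.1.length + 1))
        (not_not_intro (length_insS i m)), zero_add]
  rw [htop, hlow, E_single]
  -- the "all ≥ k" fact for insS i m
  have hall : ∀ x ∈ (insS i m).1, k ≤ x := by
    intro x hx
    rcases (List.mem_orderedInsert _).mp hx with rfl | hx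
    · exact hki
    · exact hsc.1 x hx
  have hsorted : (k :: (insS i m).1).Pairwise (· ≤ ·) := sorted_cons_of_forall_le (insS i m).2 hall
  -- LHS first term
  rw [insS_eq_cons hall hsorted]
  -- RHS : f k v
  have hfk : f b k v = e ⟨k :: (insS i m).1, hsorted⟩ + f b k w := by
    rw [hvw, map_add, f_e, g_easy b k (insS i m) hsorted]
  rw [hfk]
  -- low sum
  have hlowsum : (w.sum fun m' c => c • gAux b m.1.length k m'.1 m'.2) = f b k w := by
    rw [f_apply_sum]
    apply Finsupp.sum_congr
    intro m' hm'
    rw [g_def_eq b m.1.length k m' (supp_len_of_mem_Vle hw hm')]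
  rw [hlowsum]
  -- bracket sum
  have hbr : ((b.repr ⁅b i, b k⁆).sum fun k' c => c • gAux b m.1.length k' m.1 hkm.of_cons)
      = φ b ⁅b i, b k⁆ (e m) := by
    rw [φ_apply_e]
    apply Finsupp.sum_congr
    intro k' _
    congr 1
  rw [hbr]

lemma g_sub_e_mem (i : ι) (m : S ι) : g b i m - e (insS i m) ∈ Vle m.1.length := by
  have := gAux_sub_e_mem b m.1.length i m.1 m.2 le_rfl
  convert this using 2
  rfl

theorem comm : ∀ n : ℕ, ∀ (i j : ι) (l : S ι), l.1.length ≤ n →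
    f b i (f b j (e l)) - f b j (f b i (e l)) = φ b ⁅b i, b j⁆ (e l) := by
  intro n
  induction n using Nat.strong_induction_on with
  | _ n IH =>
  -- extended commutation on lower filtration
  have commV : ∀ n', n' < n → ∀ (i : ι) (x : FreeLieAlgebra ℤ B), ∀ u ∈ Vle (ι := ι) n',
      f b i (φ b x u) - φ b x (f b i u) = φ b ⁅b i, x⁆ u := by
    intro n' hn' i x
    have hbasis : ∀ (x : FreeLieAlgebra ℤ B), ∀ l : S ι, l.1.length ≤ n' →
        f b i (φ b x (e l)) - φ b x (f b i (e l)) = φ b ⁅b i, x⁆ (e l) := by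
      intro x l hl
      have hx : x ∈ Submodule.span ℤ (Set.range b) := by rw [Module.Basis.span_eq]; trivial
      induction hx using Submodule.span_induction with
      | mem y hy =>
        obtain ⟨j, rfl⟩ := hy
        rw [φ_basis]
        exact IH n' hn' i j l hl
      | zero => simp
      | add y z hy hz hy' hz' =>
        simp only [map_add, LinearMap.add_apply, lie_add]
        rw [← hy', ← hz']
        abel
      | smul c y hy hy' =>
        simp only [map_smul, lie_smul, LinearMap.smul_apply]
        rw [← hy', smul_sub]
    intro u hu
    rw [Vle, Finsupp.supported_eq_span_single] at hu
    induction hu using Submodule.span_induction with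
    | mem v hv =>
      obtain ⟨l, hl, rfl⟩ := hv
      exact hbasis x l hl
    | zero => simp
    | add v w hv hw hv' hw' =>
      simp only [map_add]
      rw [← hv', ← hw']
      abel
    | smul c v hv hv' =>
      simp only [map_smul]
      rw [← hv', smul_sub]
  -- the core case j < i
  have core : ∀ (i j : ι), j < i → ∀ l : S ι, l.1.length ≤ n →
      f b i (f b j (e l)) - f b j (f b i (e l)) = φ b ⁅b i, b j⁆ (e l) := by
    intro i j hji l hl
    by_cases hjl : ∀ x ∈ l.1, j ≤ x
    · -- easy case : j ≤ everything in l
      have hs : (j :: l.1).Pairwise (· ≤ ·) := sorted_cons_of_forall_le l.2 hjl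
      have h1 : f b j (e l) = e ⟨j :: l.1, hs⟩ := by rw [f_e, g_easy b j l hs]
      have h2 : f b i (e ⟨j :: l.1, hs⟩) = f b j (f b i (e l)) + φ b ⁅b i, b j⁆ (e l) := by
        rw [f_e, gD b i j l hs (not_le.mpr hji), f_e]
      rw [h1, h2]
      abel
    · -- hard case : l = k :: l₂ with k < j < i
      obtain ⟨lv, hsl⟩ := l
      cases lv with
      | nil => exact absurd (by intro x hx; simp at hx) hjl
      | cons k l₂ =>
      push_neg at hjl
      obtain ⟨x0, hx0mem, hx0⟩ := hjl
      have hs2 : l₂.Pairwise (· ≤ ·) := hsl.of_cons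
      have hsc := List.pairwise_cons.mp hsl
      have hkj : k < j := by
        rcases List.mem_cons.mp hx0mem with rfl | hx0'
        · exact hx0
        · exact lt_of_le_of_lt (hsc.1 x0 hx0') hx0
      have hki : k < i := lt_trans hkj hji
      have hn2 : l₂.length < n := by
        have : (k :: l₂).length ≤ n := hl
        simp at this; omega
      set u : V ι := e ⟨l₂, hs2⟩ with hu
      have humem : u ∈ Vle (ι := ι) l₂.length := e_mem_Vle le_rfl
      have hfku : f b k u = e ⟨k :: l₂, hsl⟩ := by
        rw [hu, f_e, g_easy b k ⟨l₂, hs2⟩ hsl]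
      -- one-sided expansion
      have expand : ∀ p q : ι, k < p → k < q →
          f b p (f b q (e ⟨k :: l₂, hsl⟩)) =
            f b k (f b p (f b q u)) + φ b ⁅b p, b k⁆ (f b q u)
            + φ b ⁅b q, b k⁆ (f b p u) + φ b ⁅b p, ⁅b q, b k⁆⁆ u := by
        intro p q hkp hkq
        have h1 : f b q (e ⟨k :: l₂, hsl⟩) = f b k (f b q u) + φ b ⁅b q, b k⁆ u := by
          rw [f_e, gD b q k ⟨l₂, hs2⟩ hsl (not_le.mpr hkq), f_e]
        rw [h1, map_add]
        -- second summand
        have h2 : f b p (φ b ⁅b q, b k⁆ u) =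
            φ b ⁅b q, b k⁆ (f b p u) + φ b ⁅b p, ⁅b q, b k⁆⁆ u := by
          have := commV l₂.length hn2 p ⁅b q, b k⁆ u humem
          rw [sub_eq_iff_eq_add] at this
          rw [this]; abel
        rw [h2]
        -- first summand : decompose f q u
        set m0 : S ι := insS q ⟨l₂, hs2⟩ with hm0
        set w : V ι := g b q ⟨l₂, hs2⟩ - e m0 with hwdef
        have hwmem : w ∈ Vle (ι := ι) l₂.length := g_sub_e_mem b q ⟨l₂, hs2⟩
        have hfqu : f b q u = e m0 + w := by rw [hu, f_e, hwdef]; abel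
        have hallk : ∀ x ∈ m0.1, k ≤ x := by
          intro x hx
          rcases (List.mem_orderedInsert _).mp hx with rfl | hx
          · exact le_of_lt hkq
          · exact hsc.1 x hx
        have hm0s : (k :: m0.1).Pairwise (· ≤ ·) := sorted_cons_of_forall_le m0.2 hallk
        have h3 : f b p (f b k (e m0)) = f b k (f b p (e m0)) + φ b ⁅b p, b k⁆ (e m0) := by
          rw [f_e (l := m0), g_easy b k m0 hm0s, f_e, gD b p k m0 hm0s (not_le.mpr hkp), f_e]
        have h4 : f b p (f b k w) = f b k (f b p w) + φ b ⁅b p, b k⁆ w := by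
          have := commV l₂.length hn2 p (b k) w hwmem
          rw [φ_basis] at this
          rw [sub_eq_iff_eq_add] at this
          rw [this]; abel
        rw [hfqu]
        simp only [map_add]
        rw [h3, h4]
        abel
      have E1 := expand i j hki hkj
      have E2 := expand j i hkj hki
      have IHu : f b i (f b j u) - f b j (f b i u) = φ b ⁅b i, b j⁆ u :=
        IH l₂.length hn2 i j ⟨l₂, hs2⟩ le_rfl
      have C1 : f b k (φ b ⁅b i, b j⁆ u) =
          φ b ⁅b i, b j⁆ (e ⟨k :: l₂, hsl⟩) + φ b ⁅b k, ⁅b i, b j⁆⁆ u := by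
        have := commV l₂.length hn2 k ⁅b i, b j⁆ u humem
        rw [sub_eq_iff_eq_add] at this
        rw [this, hfku]; abel
      have hjac : ⁅b k, ⁅b i, b j⁆⁆ + ⁅b i, ⁅b j, b k⁆⁆ - ⁅b j, ⁅b i, b k⁆⁆ =
          (0 : FreeLieAlgebra ℤ B) := by
        rw [show ⁅b i, ⁅b j, b k⁆⁆ = ⁅⁅b i, b j⁆, b k⁆ + ⁅b j, ⁅b i, b k⁆⁆ from
          leibniz_lie _ _ _]
        rw [← lie_skew ⁅b i, b j⁆ (b k)]
        abel
      calc f b i (f b j (e ⟨k :: l₂, hsl⟩)) - f b j (f b i (e ⟨k :: l₂, hsl⟩))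
          = (f b k (f b i (f b j u)) - f b k (f b j (f b i u)))
            + (φ b ⁅b i, ⁅b j, b k⁆⁆ u - φ b ⁅b j, ⁅b i, b k⁆⁆ u) := by
            rw [E1, E2]; abel
        _ = f b k (φ b ⁅b i, b j⁆ u)
            + (φ b ⁅b i, ⁅b j, b k⁆⁆ u - φ b ⁅b j, ⁅b i, b k⁆⁆ u) := by
            rw [← map_sub, IHu]
        _ = φ b ⁅b i, b j⁆ (e ⟨k :: l₂, hsl⟩)
            + (φ b ⁅b k, ⁅b i, b j⁆⁆ u + φ b ⁅b i, ⁅b j, b k⁆⁆ u - φ b ⁅b j, ⁅b i, b k⁆⁆ u) := by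
            rw [C1]; abel
        _ = φ b ⁅b i, b j⁆ (e ⟨k :: l₂, hsl⟩)
            + (φ b (⁅b k, ⁅b i, b j⁆⁆ + ⁅b i, ⁅b j, b k⁆⁆ - ⁅b j, ⁅b i, b k⁆⁆)) u := by
            simp only [map_add, map_sub, LinearMap.add_apply, LinearMap.sub_apply]
        _ = φ b ⁅b i, b j⁆ (e ⟨k :: l₂, hsl⟩) := by
            rw [hjac]; simp
  intro i j l hl
  rcases lt_trichotomy j i with hji | rfl | hij
  · exact core i j hji l hl
  · simp
  · have h := core j i hij l hl
    have : f b i (f b j (e l)) - f b j (f b i (e l)) =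
        -(f b j (f b i (e l)) - f b i (f b j (e l))) := by abel
    rw [this, h, ← lie_skew (b j) (b i), map_neg]
    simp

/-- `φ` is a morphism of Lie algebras into `End V` with commutator bracket. -/
lemma φ_lie (x y : FreeLieAlgebra ℤ B) :
    φ b ⁅x, y⁆ = φ b x * φ b y - φ b y * φ b x := by
  have base : ∀ i j : ι, φ b ⁅b i, b j⁆ = φ b (b i) * φ b (b j) - φ b (b j) * φ b (b i) := by
    intro i j
    apply Finsupp.lhom_ext'
    intro l
    apply LinearMap.ext_ring
    have hc := comm b l.1.length i j l le_rfl
    simp only [φ_basis] at hc ⊢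
    simp only [LinearMap.comp_apply, LinearMap.sub_apply, Module.End.mul_apply,
      Finsupp.lsingle_apply]
    have : Finsupp.single l (1 : ℤ) = e l := rfl
    rw [this]
    rw [sub_eq_iff_eq_add] at hc
    rw [hc]
    abel
  have hy : ∀ (x : FreeLieAlgebra ℤ B), x ∈ Submodule.span ℤ (Set.range b) →
      ∀ (y : FreeLieAlgebra ℤ B), y ∈ Submodule.span ℤ (Set.range b) →
      φ b ⁅x, y⁆ = φ b x * φ b y - φ b y * φ b x := by
    intro x hx
    induction hx using Submodule.span_induction with
    | mem x' hx' =>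
      obtain ⟨i, rfl⟩ := hx'
      intro y hy
      induction hy using Submodule.span_induction with
      | mem y' hy' => obtain ⟨j, rfl⟩ := hy'; exact base i j
      | zero => simp
      | add u v hu hv hu' hv' =>
        simp only [lie_add, map_add, mul_add, add_mul]
        rw [hu', hv']; abel
      | smul c u hu hu' =>
        simp only [lie_smul, map_smul]
        rw [hu']
        simp only [smul_sub, smul_mul_assoc, mul_smul_comm]
    | zero => intro y _; simp
    | add u v hu hv hu' hv' =>
      intro y hy
      simp only [add_lie, map_add, mul_add, add_mul]
      rw [hu' y hy, hv' y hy]; abel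
    | smul c u hu hu' =>
      intro y hy
      simp only [smul_lie, map_smul]
      rw [hu' y hy]
      simp only [smul_sub, smul_mul_assoc, mul_smul_comm]
  have hx : x ∈ Submodule.span ℤ (Set.range b) := by rw [Module.Basis.span_eq]; trivial
  have hyy : y ∈ Submodule.span ℤ (Set.range b) := by rw [Module.Basis.span_eq]; trivial
  exact hy x hx y hyy

/-- `φ` as a Lie algebra morphism. -/
noncomputable def ρ : FreeLieAlgebra ℤ B →ₗ⁅ℤ⁆ Module.End ℤ (V ι) :=
  { φ b with
    map_lie' := by
      intro x y
      have := φ_lie b x y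
      rw [Ring.lie_def]
      exact this }

@[simp] lemma ρ_apply (x : FreeLieAlgebra ℤ B) : ρ b x = φ b x := rfl

/-- The associated algebra morphism out of the free algebra. -/
noncomputable def Φ : FreeAlgebra ℤ B →ₐ[ℤ] Module.End ℤ (V ι) :=
  FreeAlgebra.lift ℤ fun x => φ b (FreeLieAlgebra.of ℤ x)

lemma Φ_μ (z : FreeLieAlgebra ℤ B) : Φ b (freeLieToFreeAssoc B z) = φ b z := by
  have : ((Φ b (ι := ι)).toLieHom.comp (freeLieToFreeAssoc B)) = ρ b := by
    apply FreeLieAlgebra.hom_ext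
    intro x
    have h1 : freeLieToFreeAssoc B (FreeLieAlgebra.of ℤ x) = FreeAlgebra.ι ℤ x :=
      FreeLieAlgebra.lift_of_apply _ _
    show Φ b (freeLieToFreeAssoc B (FreeLieAlgebra.of ℤ x)) = ρ b (FreeLieAlgebra.of ℤ x)
    rw [h1]
    show Φ b (FreeAlgebra.ι ℤ x) = _
    rw [Φ, FreeAlgebra.lift_ι_apply]
    rfl
  have := congrArg (fun F => F z) this
  exact this

/-! ### The free algebra side -/

noncomputable def prodList (lv : List ι) : FreeAlgebra ℤ B :=
  (lv.map fun i => freeLieToFreeAssoc B (b i)).prod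

noncomputable def sProd (l : S ι) : FreeAlgebra ℤ B := prodList b l.1

@[simp] lemma prodList_nil : prodList (B := B) b [] = 1 := rfl

lemma prodList_cons (i : ι) (lv : List ι) :
    prodList b (i :: lv) = freeLieToFreeAssoc B (b i) * prodList b lv := by
  simp [prodList]

noncomputable def eNil : V ι := e ⟨[], List.Pairwise.nil⟩

lemma Φ_prodList_eNil : ∀ (lv : List ι) (hs : lv.Pairwise (· ≤ ·)),
    Φ b (prodList b lv) eNil = e ⟨lv, hs⟩ := by
  intro lv
  induction lv with
  | nil =>
    intro hs
    simp only [prodList_nil, map_one]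
    rfl
  | cons i lv' IH =>
    intro hs
    rw [prodList_cons, map_mul]
    have hs' : lv'.Pairwise (· ≤ ·) := hs.of_cons
    rw [Module.End.mul_apply, IH hs', Φ_μ, φ_basis, f_e, g_easy b i ⟨lv', hs'⟩ hs]

lemma sProd_linearIndependent : LinearIndependent ℤ (sProd (ι := ι) b) := by
  have hcomp : LinearIndependent ℤ fun l : S ι =>
      ((LinearMap.applyₗ (eNil : V ι)).comp (Φ b (ι := ι)).toLinearMap) (sProd b l) := by
    have : (fun l : S ι =>
        ((LinearMap.applyₗ (eNil : V ι)).comp (Φ b (ι := ι)).toLinearMap) (sProd b l)) =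
        fun l : S ι => Finsupp.single l (1 : ℤ) := by
      funext l
      simp only [LinearMap.comp_apply, LinearMap.applyₗ_apply_apply]
      show Φ b (sProd b l) eNil = _
      rw [sProd, Φ_prodList_eNil b l.1 l.2]
      rfl
    rw [this]
    have := (Finsupp.basisSingleOne (R := ℤ) (ι := S ι)).linearIndependent
    rwa [Finsupp.coe_basisSingleOne] at this
  exact hcomp.of_comp _

noncomputable def Wle (n : ℕ) : Submodule ℤ (FreeAlgebra ℤ B) :=
  Submodule.span ℤ (sProd b '' {l : S ι | l.1.length ≤ n})

noncomputable def Wlt (n : ℕ) : Submodule ℤ (FreeAlgebra ℤ B) :=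
  Submodule.span ℤ (sProd b '' {l : S ι | l.1.length < n})

lemma Wle_mono {n n' : ℕ} (h : n ≤ n') : Wle (ι := ι) b n ≤ Wle b n' :=
  Submodule.span_mono (Set.image_mono fun l hl => le_trans hl h)

lemma Wlt_succ (n : ℕ) : Wlt (ι := ι) b (n + 1) = Wle b n := by
  rw [Wlt, Wle]
  congr 1
  ext t
  simp only [Set.mem_image, Set.mem_setOf_eq, Nat.lt_succ_iff]

lemma Wle_le_Wlt_succ (n : ℕ) : Wle (ι := ι) b n ≤ Wlt b (n + 1) := le_of_eq (Wlt_succ b n).symm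

lemma sProd_mem_Wle {l : S ι} {n : ℕ} (h : l.1.length ≤ n) : sProd b l ∈ Wle b n :=
  Submodule.subset_span ⟨l, h, rfl⟩

lemma sProd_cons (j : ι) (m : List ι) (h : (j :: m).Pairwise (· ≤ ·)) :
    sProd b ⟨j :: m, h⟩ = freeLieToFreeAssoc B (b j) * sProd b ⟨m, h.of_cons⟩ := by
  simp [sProd, prodList]

/-- straightening : multiplying a sorted product by a basis element gives the ordered
insertion plus lower length terms. -/
lemma straighten : ∀ n : ℕ, ∀ l : S ι, l.1.length ≤ n → ∀ i : ι,
    freeLieToFreeAssoc B (b i) * sProd b l - sProd b (insS i l) ∈ Wle b l.1.length := by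
  intro n
  induction n using Nat.strong_induction_on with
  | _ n IH =>
  -- multiplication by `μ x` raises `Wle` by at most one (in lower range)
  have P : ∀ (x : FreeLieAlgebra ℤ B) (m : ℕ), m < n → ∀ w ∈ Wle (ι := ι) b m,
      freeLieToFreeAssoc B x * w ∈ Wle b (m + 1) := by
    intro x m hm w hw
    have hx : x ∈ Submodule.span ℤ (Set.range b) := by rw [Module.Basis.span_eq]; trivial
    induction hx using Submodule.span_induction with
    | mem y hy =>
      obtain ⟨i, rfl⟩ := hy
      induction hw using Submodule.span_induction with
      | mem t ht =>
        obtain ⟨l', hl', rfl⟩ := ht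
        have hl'' : l'.1.length ≤ m := hl'
        have h1 := IH m hm l' hl'' i
        have h2 : sProd b (insS i l') ∈ Wle (ι := ι) b (m + 1) :=
          sProd_mem_Wle b (by rw [length_insS]; omega)
        have := Submodule.add_mem _ (Wle_mono b (by omega : l'.1.length ≤ m+1) h1) h2
        simpa using this
      | zero => simp
      | add u v hu hv hu' hv' => rw [mul_add]; exact Submodule.add_mem _ hu' hv'
      | smul c u hu hu' => rw [mul_smul_comm]; exact Submodule.smul_mem _ c hu'
    | zero => simp
    | add y z hy hz hy' hz' =>
      rw [map_add, add_mul]; exact Submodule.add_mem _ hy' hz'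
    | smul c y hy hy' =>
      rw [map_smul, smul_mul_assoc]; exact Submodule.smul_mem _ c hy'
  intro l hl i
  obtain ⟨lv, hs⟩ := l
  cases lv with
  | nil =>
    have : insS i (⟨[], hs⟩ : S ι) = ⟨[i], List.pairwise_singleton _ i⟩ := rfl
    rw [this]
    have h1 : sProd b (⟨[], hs⟩ : S ι) = 1 := rfl
    have h2 : sProd b ⟨[i], List.pairwise_singleton _ i⟩ = freeLieToFreeAssoc B (b i) := by
      simp [sProd, prodList]
    rw [h1, h2, mul_one, sub_self]
    exact Submodule.zero_mem _
  | cons j l₂ =>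
    have hs2 : l₂.Pairwise (· ≤ ·) := hs.of_cons
    have hl₂ : l₂.length < n := by simp at hl; omega
    by_cases hij : i ≤ j
    · have hins : insS i (⟨j :: l₂, hs⟩ : S ι) = ⟨i :: j :: l₂, sorted_cons_cons hij hs⟩ :=
        Subtype.ext (List.orderedInsert_cons_of_le (· ≤ ·) l₂ hij)
      rw [hins, sProd_cons b i (j :: l₂) (sorted_cons_cons hij hs)]
      have : sProd b ⟨j :: l₂, (sorted_cons_cons hij hs).of_cons⟩ = sProd b ⟨j :: l₂, hs⟩ := rfl
      rw [this, sub_self]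
      exact Submodule.zero_mem _
    · have h1 : freeLieToFreeAssoc B (b i) * prodList b l₂ -
          prodList b (l₂.orderedInsert (· ≤ ·) i) ∈ Wle (ι := ι) b l₂.length :=
        IH l₂.length hl₂ ⟨l₂, hs2⟩ le_rfl i
      have hlie : freeLieToFreeAssoc B ⁅b i, b j⁆ =
          freeLieToFreeAssoc B (b i) * freeLieToFreeAssoc B (b j)
          - freeLieToFreeAssoc B (b j) * freeLieToFreeAssoc B (b i) := by
        rw [LieHom.map_lie]
        exact Ring.lie_def _ _
      have hsplit : freeLieToFreeAssoc B (b i) * prodList b (j :: l₂) -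
          prodList b (j :: l₂.orderedInsert (· ≤ ·) i) =
          freeLieToFreeAssoc B (b j) * (freeLieToFreeAssoc B (b i) * prodList b l₂
            - prodList b (l₂.orderedInsert (· ≤ ·) i))
          + freeLieToFreeAssoc B ⁅b i, b j⁆ * prodList b l₂ := by
        rw [prodList_cons, prodList_cons, hlie]
        noncomm_ring
      have hgoal : freeLieToFreeAssoc B (b i) * sProd b ⟨j :: l₂, hs⟩ -
          sProd b (insS i ⟨j :: l₂, hs⟩) =
          freeLieToFreeAssoc B (b i) * prodList b (j :: l₂) -
          prodList b (j :: l₂.orderedInsert (· ≤ ·) i) := by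
        have hlist : (insS i (⟨j :: l₂, hs⟩ : S ι)).1 = j :: l₂.orderedInsert (· ≤ ·) i := by
          show (j :: l₂).orderedInsert (· ≤ ·) i = _
          rw [List.orderedInsert, if_neg hij]
        rw [show sProd b (insS i ⟨j :: l₂, hs⟩) = prodList b (insS i ⟨j :: l₂, hs⟩).1 from rfl,
          hlist]
        rfl
      rw [hgoal, hsplit]
      have hm1 : freeLieToFreeAssoc B (b j) * (freeLieToFreeAssoc B (b i) * prodList b l₂
          - prodList b (l₂.orderedInsert (· ≤ ·) i)) ∈ Wle (ι := ι) b (l₂.length + 1) :=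
        P (b j) l₂.length hl₂ _ h1
      have hm2 : freeLieToFreeAssoc B ⁅b i, b j⁆ * prodList b l₂ ∈
          Wle (ι := ι) b (l₂.length + 1) := by
        refine P ⁅b i, b j⁆ l₂.length hl₂ _ ?_
        exact sProd_mem_Wle b (le_refl (Subtype.mk l₂ hs2).1.length)
      have hlen : (j :: l₂).length = l₂.length + 1 := rfl
      rw [hlen]
      exact Submodule.add_mem _ hm1 hm2

lemma Wle_le_span (n : ℕ) : Wle (ι := ι) b n ≤ Submodule.span ℤ (Set.range (sProd b)) :=
  Submodule.span_mono (by rintro t ⟨l, _, rfl⟩; exact ⟨l, rfl⟩)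

lemma mul_mem_span : ∀ (x : FreeLieAlgebra ℤ B) (w : FreeAlgebra ℤ B),
    w ∈ Submodule.span ℤ (Set.range (sProd b)) →
    freeLieToFreeAssoc B x * w ∈ Submodule.span ℤ (Set.range (sProd b)) := by
  intro x w hw
  have hx : x ∈ Submodule.span ℤ (Set.range b) := by rw [Module.Basis.span_eq]; trivial
  induction hx using Submodule.span_induction with
  | mem y hy =>
    obtain ⟨i, rfl⟩ := hy
    induction hw using Submodule.span_induction with
    | mem t ht =>
      obtain ⟨l, rfl⟩ := ht
      have h1 := straighten b l.1.length l le_rfl i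
      have h2 : freeLieToFreeAssoc B (b i) * sProd b l =
          (freeLieToFreeAssoc B (b i) * sProd b l - sProd b (insS i l)) + sProd b (insS i l) := by
        abel
      rw [h2]
      exact Submodule.add_mem _ (Wle_le_span b _ h1) (Submodule.subset_span ⟨insS i l, rfl⟩)
    | zero => simp
    | add u v hu hv hu' hv' => rw [mul_add]; exact Submodule.add_mem _ hu' hv'
    | smul c u hu hu' => rw [mul_smul_comm]; exact Submodule.smul_mem _ c hu'
  | zero => rw [map_zero, zero_mul]; exact Submodule.zero_mem _
  | add y z hy hz hy' hz' =>
    rw [map_add, add_mul]; exact Submodule.add_mem _ hy' hz'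
  | smul c y hy hy' =>
    rw [map_smul, smul_mul_assoc]; exact Submodule.smul_mem _ c hy'

lemma prodList_mul_mem : ∀ (lv : List ι) (w : FreeAlgebra ℤ B),
    w ∈ Submodule.span ℤ (Set.range (sProd b)) →
    prodList b lv * w ∈ Submodule.span ℤ (Set.range (sProd b)) := by
  intro lv
  induction lv with
  | nil => intro w hw; rw [prodList_nil, one_mul]; exact hw
  | cons i lv' IH =>
    intro w hw
    rw [prodList_cons, mul_assoc]
    exact mul_mem_span b (b i) _ (IH w hw)

lemma span_sProd_top : ⊤ ≤ Submodule.span ℤ (Set.range (sProd (B := B) (ι := ι) b)) := by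
  intro t _
  have hone : (1 : FreeAlgebra ℤ B) ∈ Submodule.span ℤ (Set.range (sProd (ι := ι) b)) :=
    Submodule.subset_span ⟨⟨[], List.Pairwise.nil⟩, rfl⟩
  induction t using FreeAlgebra.induction with
  | grade0 r =>
    rw [Algebra.algebraMap_eq_smul_one]
    exact Submodule.smul_mem _ _ hone
  | grade1 x =>
    have h1 : FreeAlgebra.ι ℤ x = freeLieToFreeAssoc B (FreeLieAlgebra.of ℤ x) * 1 := by
      rw [mul_one]
      exact (FreeLieAlgebra.lift_of_apply _ _).symm
    rw [h1]
    exact mul_mem_span b _ _ hone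
  | mul a c ha hc =>
    have key : ∀ a ∈ Submodule.span ℤ (Set.range (sProd (ι := ι) b)),
        ∀ c ∈ Submodule.span ℤ (Set.range (sProd (ι := ι) b)),
        a * c ∈ Submodule.span ℤ (Set.range (sProd (ι := ι) b)) := by
      intro a ha
      induction ha using Submodule.span_induction with
      | mem t ht =>
        obtain ⟨l, rfl⟩ := ht
        intro c hc
        exact prodList_mul_mem b l.1 c hc
      | zero => intro c hc; rw [zero_mul]; exact Submodule.zero_mem _
      | add u v hu hv hu' hv' =>
        intro c hc
        rw [add_mul]; exact Submodule.add_mem _ (hu' c hc) (hv' c hc)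
      | smul r u hu hu' =>
        intro c hc
        rw [smul_mul_assoc]; exact Submodule.smul_mem _ r (hu' c hc)
    exact key a (ha trivial) c (hc trivial)
  | add a c ha hc => exact Submodule.add_mem _ (ha trivial) (hc trivial)

noncomputable def sBasis : Module.Basis (S ι) ℤ (FreeAlgebra ℤ B) :=
  Module.Basis.mk (sProd_linearIndependent b) (span_sProd_top b)

lemma sBasis_apply (l : S ι) : sBasis b l = sProd b l := Module.Basis.mk_apply _ _ _

lemma repr_sProd (l : S ι) : (sBasis b).repr (sProd b l) = Finsupp.single l 1 := by
  rw [← sBasis_apply]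
  exact (sBasis b).repr_self l

lemma repr_Wlt {n : ℕ} {v : FreeAlgebra ℤ B} (hv : v ∈ Wlt (ι := ι) b n) (l0 : S ι)
    (h : ¬ l0.1.length < n) : (sBasis b).repr v l0 = 0 := by
  induction hv using Submodule.span_induction with
  | mem t ht =>
    obtain ⟨m, hm, rfl⟩ := ht
    have hm' : m.1.length < n := hm
    rw [repr_sProd, Finsupp.single_apply, if_neg]
    rintro rfl
    exact h hm'
  | zero => simp
  | add u v _ _ hu hv => rw [map_add, Finsupp.add_apply, hu, hv, add_zero]
  | smul c u _ hu => rw [map_smul, Finsupp.smul_apply, hu, smul_zero]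

lemma mul_Wlt (i : ι) (n : ℕ) (w : FreeAlgebra ℤ B) (hw : w ∈ Wlt (ι := ι) b n) :
    freeLieToFreeAssoc B (b i) * w ∈ Wle b n := by
  induction hw using Submodule.span_induction with
  | mem t ht =>
    obtain ⟨m, hm, rfl⟩ := ht
    have hm' : m.1.length < n := hm
    have h1 := straighten b m.1.length m le_rfl i
    have h2 : freeLieToFreeAssoc B (b i) * sProd b m =
        (freeLieToFreeAssoc B (b i) * sProd b m - sProd b (insS i m)) + sProd b (insS i m) := by
      abel
    rw [h2]
    refine Submodule.add_mem _ (Wle_mono b (by omega) h1) (sProd_mem_Wle b ?_)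
    rw [length_insS]; omega
  | zero => simp
  | add u v _ _ hu hv => rw [mul_add]; exact Submodule.add_mem _ hu hv
  | smul c u _ hu => rw [mul_smul_comm]; exact Submodule.smul_mem _ c hu

lemma prodList_sub_sort (lv : List ι) :
    prodList b lv - sProd b ⟨lv.insertionSort (· ≤ ·), List.pairwise_insertionSort _ lv⟩ ∈
      Wlt b lv.length := by
  induction lv with
  | nil =>
    have : prodList (B := B) b [] - sProd b ⟨[].insertionSort (· ≤ ·), List.pairwise_insertionSort _ []⟩
        = 0 := sub_self _
    rw [this]
    exact Submodule.zero_mem _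
  | cons i lv' IH =>
    have hsort' := List.pairwise_insertionSort (· ≤ ·) lv'
    have hsplit : prodList b (i :: lv') -
        sProd b ⟨(i :: lv').insertionSort (· ≤ ·), List.pairwise_insertionSort _ (i :: lv')⟩ =
        freeLieToFreeAssoc B (b i) *
          (prodList b lv' - sProd b ⟨lv'.insertionSort (· ≤ ·), hsort'⟩)
        + (freeLieToFreeAssoc B (b i) * sProd b ⟨lv'.insertionSort (· ≤ ·), hsort'⟩
            - sProd b (insS i ⟨lv'.insertionSort (· ≤ ·), hsort'⟩)) := by
      rw [prodList_cons]
      have : sProd b ⟨(i :: lv').insertionSort (· ≤ ·), List.pairwise_insertionSort _ (i :: lv')⟩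
          = sProd b (insS i ⟨lv'.insertionSort (· ≤ ·), hsort'⟩) := rfl
      rw [this]
      noncomm_ring
    rw [hsplit, show (i :: lv').length = lv'.length + 1 from rfl, Wlt_succ]
    refine Submodule.add_mem _ (mul_Wlt b i lv'.length _ IH) ?_
    have h1 := straighten b (lv'.insertionSort (· ≤ ·)).length
      ⟨lv'.insertionSort (· ≤ ·), hsort'⟩ le_rfl i
    have hlen : (lv'.insertionSort (· ≤ ·)).length = lv'.length :=
      (List.perm_insertionSort _ lv').length_eq
    rw [hlen] at h1
    exact h1

end PBWAux

/-- **PBW with rearrangements.** Let `B` be a finite set, `M = (b i)_{i : ι}` a totally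
ordered ℤ-basis of the free Lie algebra `L(B)`, and for each nondecreasing word
`u = v₁⋯v_κ` in `M` choose an arbitrary rearrangement `u′`. Then the chosen rearranged
products form a ℤ-basis of `T(B)`, the free associative ℤ-algebra on `B`. -/
theorem rearranged_PBW_basis (B : Type*) [Fintype B] (ι : Type*) [LinearOrder ι]
    (b : Module.Basis ι ℤ (FreeLieAlgebra ℤ B))
    (r : {l : List ι // l.Pairwise (· ≤ ·)} → List ι)
    (hr : ∀ l : {l : List ι // l.Pairwise (· ≤ ·)}, (r l).Perm l.1) :
    ∃ v : Module.Basis {l : List ι // l.Pairwise (· ≤ ·)} ℤ (FreeAlgebra ℤ B),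
      ∀ l, v l = ((r l).map fun i => freeLieToFreeAssoc B (b i)).prod := by
  classical
  set p : PBWAux.S ι → FreeAlgebra ℤ B := fun l => PBWAux.prodList b (r l) with hp
  have htri : ∀ l : PBWAux.S ι, p l - PBWAux.sProd b l ∈ PBWAux.Wlt b l.1.length := by
    intro l
    have hsort : (r l).insertionSort (· ≤ ·) = l.1 :=
      List.Perm.eq_of_pairwise' (List.pairwise_insertionSort _ _) l.2
        ((List.perm_insertionSort _ _).trans (hr l))
    have h1 := PBWAux.prodList_sub_sort b (r l)
    have hlen : (r l).length = l.1.length := (hr l).length_eq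
    rw [hlen] at h1
    have hs : PBWAux.sProd b ⟨(r l).insertionSort (· ≤ ·), List.pairwise_insertionSort _ (r l)⟩
        = PBWAux.sProd b l := by
      congr 1
      exact Subtype.ext hsort
    rwa [hs] at h1
  have hindep : LinearIndependent ℤ p := by
    rw [linearIndependent_iff]
    intro c hc
    by_contra hc0
    have hsupp : c.support.Nonempty := Finsupp.support_nonempty_iff.mpr hc0
    obtain ⟨l0, hl0mem, hmax⟩ :=
      Finset.exists_max_image c.support (fun l => l.1.length) hsupp
    have h := congrArg (fun t => (PBWAux.sBasis b).repr t l0) hc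
    simp only [Finsupp.linearCombination_apply, map_zero, Finsupp.coe_zero, Pi.zero_apply] at h
    rw [map_finsuppSum, Finsupp.sum_apply] at h
    simp only [map_smul, Finsupp.smul_apply, smul_eq_mul] at h
    have heval : ∀ l ∈ c.support, (PBWAux.sBasis b).repr (p l) l0 = if l = l0 then 1 else 0 := by
      intro l hl
      have hw := htri l
      have hsplitr : (PBWAux.sBasis b).repr (p l) l0 =
          (PBWAux.sBasis b).repr (PBWAux.sProd b l) l0 +
          (PBWAux.sBasis b).repr (p l - PBWAux.sProd b l) l0 := by
        rw [← Finsupp.add_apply, ← map_add]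
        congr 2
        abel
      rw [hsplitr, PBWAux.repr_sProd,
        PBWAux.repr_Wlt b hw l0 (by have := hmax l hl; omega), add_zero,
        Finsupp.single_apply]
    have h2 : (c.sum fun l a => a * ((PBWAux.sBasis b).repr (p l) l0)) = c l0 := by
      rw [Finsupp.sum, Finset.sum_eq_single l0]
      · rw [heval l0 hl0mem, if_pos rfl, mul_one]
      · intro l hl hne
        rw [heval l hl, if_neg hne, mul_zero]
      · intro habs
        exact absurd hl0mem habs
    rw [h2] at h
    exact (Finsupp.mem_support_iff.mp hl0mem) h
  have hspan : ⊤ ≤ Submodule.span ℤ (Set.range p) := by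
    have hs : ∀ n (l : PBWAux.S ι), l.1.length ≤ n →
        PBWAux.sProd b l ∈ Submodule.span ℤ (Set.range p) := by
      intro n
      induction n using Nat.strong_induction_on with
      | _ n IH =>
      intro l hl
      have hWlt : PBWAux.Wlt b l.1.length ≤ Submodule.span ℤ (Set.range p) := by
        refine Submodule.span_le.mpr ?_
        rintro t ⟨m, hm, rfl⟩
        have hm' : m.1.length < l.1.length := hm
        exact IH m.1.length (by omega) m le_rfl
      have hrw : PBWAux.sProd b l = p l - (p l - PBWAux.sProd b l) := by abel
      rw [hrw]
      exact Submodule.sub_mem _ (Submodule.subset_span ⟨l, rfl⟩) (hWlt (htri l))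
    intro t _
    have h2 : t ∈ Submodule.span ℤ (Set.range (PBWAux.sProd (ι := ι) b)) :=
      PBWAux.span_sProd_top b trivial
    refine Submodule.span_le.mpr ?_ h2
    rintro t' ⟨l, rfl⟩
    exact hs l.1.length l le_rfl
  refine ⟨Module.Basis.mk hindep hspan, fun l => ?_⟩
  rw [Module.Basis.mk_apply]
  rfl
end

section
/- Let G be a group generated by a set 𝒢, let S be a nonempty subset of G \ {1}, H the subgroup generated by S, and N_S the normal closure of S in G. Then N_S = H[H,G]; in particular N_S is generated by the elements [s, z₁^{ε₁}, …, z_κ^{ε_κ}] with κ ≥ 0, s ∈ S, ε_j = ±1 and z_j ∈ 𝒢. -/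
open Pointwise
open scoped commutatorElement


/-- Left-normed iterated group commutator `[s, z₁, …, z_κ]`. -/
def leftNormedComm {G : Type*} [Group G] (h : G) (l : List G) : G :=
  l.foldl (fun a b => ⁅a, b⁆) h

lemma leftNormedComm_nil {G : Type*} [Group G] (h : G) : leftNormedComm h [] = h := rfl

lemma leftNormedComm_append {G : Type*} [Group G] (h : G) (l : List G) (z : G) :
    leftNormedComm h (l ++ [z]) = ⁅leftNormedComm h l, z⁆ := by
  simp [leftNormedComm]

/-- conjugation of a commutator identity -/
lemma conj_commutator_eq {G : Type*} [Group G] (p y q : G) :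
    q * ⁅p, y⁆ * q⁻¹ = ⁅p, q⁆⁻¹ * ⁅p, q * y⁆ := by
  simp only [commutatorElement_def]; group

lemma commutator_top_normal {G : Type*} [Group G] (H : Subgroup G) :
    (⁅H, (⊤ : Subgroup G)⁆).Normal := by
  constructor
  intro n hn g
  rw [Subgroup.commutator_def] at hn
  induction hn using Subgroup.closure_induction with
  | mem x hx =>
    obtain ⟨p, hp, y, -, rfl⟩ := hx
    rw [conj_commutator_eq]
    exact mul_mem (inv_mem (Subgroup.commutator_mem_commutator hp (Subgroup.mem_top g)))
      (Subgroup.commutator_mem_commutator hp (Subgroup.mem_top _))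
  | one => simpa using one_mem _
  | mul x y _ _ hx hy =>
    have : g * (x * y) * g⁻¹ = (g * x * g⁻¹) * (g * y * g⁻¹) := by group
    rw [this]; exact mul_mem hx hy
  | inv x _ hx =>
    have : g * x⁻¹ * g⁻¹ = (g * x * g⁻¹)⁻¹ := by group
    rw [this]; exact inv_mem hx

/-- **Lemma 5.1(2).** Let `G` be generated by `𝒢`, `S ⊆ G \ {1}` nonempty, `H = ⟨S⟩` and
`N_S` the normal closure of `S` in `G`. Then `N_S = H[H,G]`; in particular `N_S` is
generated by the elements `[s, z₁^{ε₁}, …, z_κ^{ε_κ}]` with `κ ≥ 0`, `s ∈ S`,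
`ε_j = ±1` and `z_j ∈ 𝒢`. -/
theorem normalClosure_eq_sub_mul_commutator {G : Type*} [Group G]
    (𝒢 : Set G) (hgen : Subgroup.closure 𝒢 = ⊤)
    (S : Set G) (hS : S.Nonempty) (hS1 : (1 : G) ∉ S) :
    Subgroup.normalClosure S =
      Subgroup.closure S ⊔ ⁅Subgroup.closure S, (⊤ : Subgroup G)⁆ ∧
    Subgroup.normalClosure S =
      Subgroup.closure
        {x | ∃ s ∈ S, ∃ l : List G, (∀ z ∈ l, z ∈ 𝒢 ∨ z⁻¹ ∈ 𝒢) ∧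
          x = leftNormedComm s l} := by
  set H := Subgroup.closure S with hH
  set N := Subgroup.normalClosure S with hN
  have hSN : S ⊆ N := Subgroup.subset_normalClosure
  have hHN : H ≤ N := (Subgroup.closure_le _).mpr hSN
  -- Part 1
  have hCnormal : (⁅H, (⊤ : Subgroup G)⁆).Normal := commutator_top_normal H
  have hMnormal : (H ⊔ ⁅H, (⊤ : Subgroup G)⁆).Normal := by
    constructor
    intro n hn g
    have hmem : n ∈ ((H : Set G) * ((⁅H, (⊤ : Subgroup G)⁆ : Subgroup G) : Set G)) := by
      rw [← Subgroup.mul_normal]; exact hn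
    obtain ⟨h, hh, c, hc, rfl⟩ := hmem
    have h1 : g * (h * c) * g⁻¹ = (h * ⁅h⁻¹, g⁆) * (g * c * g⁻¹) := by
      simp only [commutatorElement_def]; group
    rw [h1]
    exact mul_mem
      (mul_mem (Subgroup.mem_sup_left hh)
        (Subgroup.mem_sup_right
          (Subgroup.commutator_mem_commutator (inv_mem hh) (Subgroup.mem_top g))))
      (Subgroup.mem_sup_right (hCnormal.conj_mem c hc g))
  have part1 : N = H ⊔ ⁅H, (⊤ : Subgroup G)⁆ := by
    apply le_antisymm
    · haveI := hMnormal
      exact Subgroup.normalClosure_le_normal fun x hx =>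
        Subgroup.mem_sup_left (Subgroup.subset_closure hx)
    · refine sup_le hHN (Subgroup.commutator_le.mpr fun p hp q _ => ?_)
      have hpN : p ∈ N := hHN hp
      have : ⁅p, q⁆ = p * (q * p⁻¹ * q⁻¹) := by group
      rw [this]
      exact mul_mem hpN (Subgroup.normalClosure_normal.conj_mem _ (inv_mem hpN) q)
  -- Part 2
  set D : Set G := {x | ∃ s ∈ S, ∃ l : List G, (∀ z ∈ l, z ∈ 𝒢 ∨ z⁻¹ ∈ 𝒢) ∧
      x = leftNormedComm s l} with hD
  set K := Subgroup.closure D with hK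
  -- conjugation by w with (w ∈ 𝒢 ∨ w⁻¹ ∈ 𝒢) maps K into K
  have hconj : ∀ w : G, (w ∈ 𝒢 ∨ w⁻¹ ∈ 𝒢) → ∀ x ∈ K, w * x * w⁻¹ ∈ K := by
    intro w hw x hx
    induction hx using Subgroup.closure_induction with
    | mem d hd =>
      obtain ⟨s, hs, l, hl, rfl⟩ := hd
      have key : w * leftNormedComm s l * w⁻¹ =
          (leftNormedComm s (l ++ [w]))⁻¹ * leftNormedComm s l := by
        rw [leftNormedComm_append, commutatorElement_def]; group
      rw [key]
      refine mul_mem (inv_mem (Subgroup.subset_closure ⟨s, hs, l ++ [w], ?_, rfl⟩))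
        (Subgroup.subset_closure ⟨s, hs, l, hl, rfl⟩)
      intro z hz
      rcases List.mem_append.mp hz with h | h
      · exact hl z h
      · simp only [List.mem_singleton] at h
        subst h; exact hw
    | one => simpa using one_mem _
    | mul x y _ _ hx hy =>
      have : w * (x * y) * w⁻¹ = (w * x * w⁻¹) * (w * y * w⁻¹) := by group
      rw [this]; exact mul_mem hx hy
    | inv x _ hx =>
      have : w * x⁻¹ * w⁻¹ = (w * x * w⁻¹)⁻¹ := by group
      rw [this]; exact inv_mem hx
  have hKnormal : K.Normal := by
    rw [← Subgroup.normalizer_eq_top_iff]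
    rw [← top_le_iff, ← hgen]
    refine (Subgroup.closure_le _).mpr fun z hz => ?_
    rw [SetLike.mem_coe, Subgroup.mem_normalizer_iff]
    intro x
    constructor
    · intro hx; exact hconj z (Or.inl hz) x hx
    · intro hx
      have := hconj z⁻¹ (Or.inr (by simpa using hz)) _ hx
      simpa [mul_assoc] using this
  have part2 : N = K := by
    apply le_antisymm
    · haveI := hKnormal
      exact Subgroup.normalClosure_le_normal fun s hs =>
        Subgroup.subset_closure ⟨s, hs, [], by simp, rfl⟩
    · refine (Subgroup.closure_le _).mpr ?_
      rintro x ⟨s, hs, l, hl, rfl⟩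
      clear hl
      induction l using List.reverseRecOn with
      | nil => exact hSN hs
      | append_singleton l z ih =>
        rw [leftNormedComm_append]
        have : ⁅leftNormedComm s l, z⁆ =
            leftNormedComm s l * (z * (leftNormedComm s l)⁻¹ * z⁻¹) := by
          rw [commutatorElement_def]; group
        rw [this]
        exact mul_mem ih (Subgroup.normalClosure_normal.conj_mem _ (inv_mem ih) z)
  exact ⟨part1, part2⟩
end

section
/- Let L be a free Lie ring over ℤ and J an ideal generated by a nonempty set of simple Lie commutators. Let N be the normal closure in the free group F of corresponding group relators lying in γ_e(F) \ γ_{e+1}(F), with images ρ₁,…,ρ_t generating the ideal I of gr(F). Then I = 𝓛(N) if and only if the induced homomorphism ξ : I/[I,I] → 𝓛(N)/[𝓛(N), 𝓛(N)] is surjective. -/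
noncomputable section

open scoped commutatorElement

/-- An identification of `L` with `gr(G)`, the graded Lie ring of the lower central
series of `G` (see the paper, Section 5). -/
structure GrIdentification (G : Type*) [Group G] (L : Type*)
    [LieRing L] [LieAlgebra ℤ L] where
  φ : ℕ → G → L
  map_mul : ∀ d, ∀ x ∈ (⊤ : Subgroup G).lowerCentralSeries d, ∀ y ∈ (⊤ : Subgroup G).lowerCentralSeries d,
    φ d (x * y) = φ d x + φ d y
  ker_eq : ∀ d, ∀ x ∈ (⊤ : Subgroup G).lowerCentralSeries d,
    (φ d x = 0 ↔ x ∈ (⊤ : Subgroup G).lowerCentralSeries (d + 1))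
  map_comm : ∀ d e, ∀ x ∈ (⊤ : Subgroup G).lowerCentralSeries d, ∀ y ∈ (⊤ : Subgroup G).lowerCentralSeries e,
    φ (d + e + 1) ⁅x, y⁆ = ⁅φ d x, φ e y⁆
  internal : DirectSum.IsInternal
    (fun d => Submodule.span ℤ (φ d '' ((⊤ : Subgroup G).lowerCentralSeries d : Set G)))

/-- The three subgroups lemma, relative to a normal subgroup `N`. -/
theorem LabuteAux.three_subgroups {G : Type*} [Group G] {A B C N : Subgroup G} [N.Normal]
    (h1 : ⁅⁅B, C⁆, A⁆ ≤ N) (h2 : ⁅⁅C, A⁆, B⁆ ≤ N) : ⁅⁅A, B⁆, C⁆ ≤ N := by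
  have key : ∀ X Y Z : Subgroup G, ⁅⁅X, Y⁆, Z⁆ ≤ N ↔
      ⁅⁅X.map (QuotientGroup.mk' N), Y.map (QuotientGroup.mk' N)⁆,
        Z.map (QuotientGroup.mk' N)⁆ = ⊥ := by
    intro X Y Z
    rw [← Subgroup.map_commutator, ← Subgroup.map_commutator, Subgroup.map_eq_bot_iff,
      QuotientGroup.ker_mk']
  rw [key]
  exact Subgroup.commutator_commutator_eq_bot_of_rotate ((key _ _ _).mp h1) ((key _ _ _).mp h2)

theorem LabuteAux.lie_sum {L : Type*} [LieRing L] {ι : Type*} (s : Finset ι) (x : L)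
    (f : ι → L) : ⁅x, ∑ i ∈ s, f i⁆ = ∑ i ∈ s, ⁅x, f i⁆ := by
  induction s using Finset.cons_induction with
  | empty => simp
  | cons a s ha ih => rw [Finset.sum_cons, Finset.sum_cons, lie_add, ih]

theorem LabuteAux.lcs_succ {G : Type*} [Group G] (n : ℕ) :
    (⊤ : Subgroup G).lowerCentralSeries (n + 1) = ⁅(⊤ : Subgroup G).lowerCentralSeries n, ⊤⁆ := rfl

/-- `⁅γ_i(G), γ_j(G)⁆ ≤ γ_{i+j+1}(G)`. -/
theorem LabuteAux.lcs_comm {G : Type*} [Group G] (i j : ℕ) :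
    ⁅(⊤ : Subgroup G).lowerCentralSeries i, (⊤ : Subgroup G).lowerCentralSeries j⁆ ≤ (⊤ : Subgroup G).lowerCentralSeries (i + j + 1) := by
  induction j generalizing i with
  | zero =>
    have h : ⁅(⊤ : Subgroup G).lowerCentralSeries i, (⊤ : Subgroup G).lowerCentralSeries 0⁆ ≤ ⁅(⊤ : Subgroup G).lowerCentralSeries i, ⊤⁆ :=
      Subgroup.commutator_mono le_rfl le_top
    rw [← LabuteAux.lcs_succ] at h
    exact h
  | succ j ih =>
    have h1 : ⁅⁅(⊤ : Subgroup G), (⊤ : Subgroup G).lowerCentralSeries i⁆, (⊤ : Subgroup G).lowerCentralSeries j⁆ ≤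
        (⊤ : Subgroup G).lowerCentralSeries (i + (j + 1) + 1) := by
      have hcomm : ⁅(⊤ : Subgroup G), (⊤ : Subgroup G).lowerCentralSeries i⁆ = (⊤ : Subgroup G).lowerCentralSeries (i + 1) := by
        rw [Subgroup.commutator_comm, ← LabuteAux.lcs_succ]
      rw [hcomm]
      have h := ih (i := i + 1)
      rwa [show i + 1 + j + 1 = i + (j + 1) + 1 by omega] at h
    have h2 : ⁅⁅(⊤ : Subgroup G).lowerCentralSeries i, (⊤ : Subgroup G).lowerCentralSeries j⁆, (⊤ : Subgroup G)⁆ ≤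
        (⊤ : Subgroup G).lowerCentralSeries (i + (j + 1) + 1) := by
      have h := Subgroup.commutator_mono (ih (i := i)) (le_refl (⊤ : Subgroup G))
      rw [← LabuteAux.lcs_succ] at h
      rwa [show i + j + 1 + 1 = i + (j + 1) + 1 by omega] at h
    have h3 := LabuteAux.three_subgroups h1 h2
    rw [← LabuteAux.lcs_succ, Subgroup.commutator_comm] at h3
    exact h3

theorem LabuteAux.comm_mem {G : Type*} [Group G] {i j : ℕ} {x y : G}
    (hx : x ∈ (⊤ : Subgroup G).lowerCentralSeries i) (hy : y ∈ (⊤ : Subgroup G).lowerCentralSeries j) :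
    ⁅x, y⁆ ∈ (⊤ : Subgroup G).lowerCentralSeries (i + j + 1) :=
  LabuteAux.lcs_comm i j (Subgroup.commutator_mem_commutator hx hy)

/-- **Labute's criterion (Lemma 5.2).** Let `F` be the free group of rank `m`,
`r₁,…,r_t ∈ γ_e(F) \ γ_{e+1}(F)` relators whose leading terms `ρ_i` are simple Lie
commutators generating the ideal `I` of `gr(F)`, and `N` the normal closure of the
relators. Then `I = 𝓛(N)` if and only if the induced homomorphism
`ξ : I/[I,I] → 𝓛(N)/[𝓛(N),𝓛(N)]` is surjective. -/
theorem labute_criterion (m : ℕ) (hm : 2 ≤ m)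
    (gr : GrIdentification (FreeGroup (Fin m)) (FreeLieAlgebra ℤ (Fin m)))
    (hgen : ∀ i : Fin m, gr.φ 0 (FreeGroup.of i) = FreeLieAlgebra.of ℤ i)
    (e : ℕ) (he : 2 ≤ e) (t : ℕ) (ht : 1 ≤ t)
    (r : Fin t → FreeGroup (Fin m))
    (hr : ∀ i, r i ∈ (⊤ : Subgroup (FreeGroup (Fin m))).lowerCentralSeries (e - 1) ∧
      r i ∉ (⊤ : Subgroup (FreeGroup (Fin m))).lowerCentralSeries e)
    (hsimple : ∀ i, ∃ d, IsSimpleLieCommutator (Fin m) (gr.φ (e - 1) (r i)) d) :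
    let G := FreeGroup (Fin m)
    let L := FreeLieAlgebra ℤ (Fin m)
    let ρ : Fin t → L := fun i => gr.φ (e - 1) (r i)
    let I : LieIdeal ℤ L := LieSubmodule.lieSpan ℤ L (Set.range ρ)
    let N : Subgroup G := Subgroup.normalClosure (Set.range r)
    let LN : Submodule ℤ L := ⨆ d : ℕ,
      Submodule.span ℤ (gr.φ d '' ((N : Set G) ∩ ((⊤ : Subgroup G).lowerCentralSeries d : Set G)))
    let DLN : Submodule ℤ L :=
      Submodule.span ℤ {z | ∃ a ∈ LN, ∃ b ∈ LN, z = ⁅a, b⁆}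
    -- `I = 𝓛(N)` iff `ξ : I/[I,I] → 𝓛(N)/[𝓛(N),𝓛(N)]` is onto
    (I.toSubmodule = LN ↔ LN ≤ I.toSubmodule ⊔ DLN) := by
  intro G L ρ I N LN DLN
  classical
  haveI hNnormal : N.Normal := Subgroup.normalClosure_normal
  -- the homogeneous components of `L` and of `LN`
  let D : ℕ → Submodule ℤ L :=
    fun d => Submodule.span ℤ (gr.φ d '' ((⊤ : Subgroup G).lowerCentralSeries d : Set G))
  let LNd : ℕ → Submodule ℤ L :=
    fun d => Submodule.span ℤ (gr.φ d '' ((N : Set G) ∩ ((⊤ : Subgroup G).lowerCentralSeries d : Set G)))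
  have hLN : LN = ⨆ d, LNd d := rfl
  have hLNdD : ∀ d, LNd d ≤ D d := fun d =>
    Submodule.span_mono (Set.image_mono Set.inter_subset_right)
  have hinternal : DirectSum.IsInternal D := gr.internal
  haveI : DirectSum.Decomposition D := hinternal.chooseDecomposition
  -- the projections onto the homogeneous components
  let π : ℕ → L →ₗ[ℤ] L := fun d =>
    (D d).subtype ∘ₗ (DirectSum.component ℤ ℕ (fun i => D i) d) ∘ₗ
      (DirectSum.decomposeLinearEquiv D).toLinearMap
  have hπ : ∀ d x, π d x = ((DirectSum.decompose D x) d : L) := fun d x => rfl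
  have hπ_same : ∀ d (x : L), x ∈ D d → π d x = x := fun d x hx => by
    rw [hπ]; exact DirectSum.decompose_of_mem_same D hx
  have hπ_ne : ∀ {p d : ℕ} (x : L), x ∈ D p → p ≠ d → π d x = 0 := fun {p d} x hx h => by
    rw [hπ]; exact DirectSum.decompose_of_mem_ne D hx h
  have hπ_memD : ∀ d (x : L), π d x ∈ D d := fun d x => by
    rw [hπ]; exact SetLike.coe_mem _
  have htop : ∀ x : L, x ∈ ⨆ d, D d := by
    rw [hinternal.submodule_iSup_eq_top]; exact fun x => trivial
  -- graded bracket: ⁅D p, D q⁆ ⊆ D (p + q + 1)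
  have hbr : ∀ p q : ℕ, ∀ x ∈ D p, ∀ y ∈ D q, ⁅x, y⁆ ∈ D (p + q + 1) := by
    intro p q x hx
    induction hx using Submodule.span_induction with
    | mem x hx =>
      obtain ⟨g, hg, rfl⟩ := hx
      intro y hy
      induction hy using Submodule.span_induction with
      | mem y hy =>
        obtain ⟨h, hh, rfl⟩ := hy
        rw [← gr.map_comm p q g hg h hh]
        exact Submodule.subset_span ⟨⁅g, h⁆, LabuteAux.comm_mem hg hh, rfl⟩
      | zero => rw [lie_zero]; exact zero_mem _
      | add a b _ _ ha hb => rw [lie_add]; exact add_mem ha hb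
      | smul c a _ ha => rw [lie_smul]; exact Submodule.smul_mem _ _ ha
    | zero => intro y hy; rw [zero_lie]; exact zero_mem _
    | add a b _ _ ha hb => intro y hy; rw [add_lie]; exact add_mem (ha y hy) (hb y hy)
    | smul c a _ ha => intro y hy; rw [smul_lie]; exact Submodule.smul_mem _ _ (ha y hy)
  -- 𝓛(N) is a Lie ideal
  have hLNlie : ∀ (x y : L), y ∈ LN → ⁅x, y⁆ ∈ LN := by
    have core : ∀ (p d : ℕ) (g n : G), g ∈ (⊤ : Subgroup G).lowerCentralSeries p → n ∈ N →
        n ∈ (⊤ : Subgroup G).lowerCentralSeries d → ⁅gr.φ p g, gr.φ d n⁆ ∈ LN := by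
      intro p d g n hg hnN hnd
      rw [← gr.map_comm p d g hg n hnd]
      have h1 : (⁅g, n⁆ : G) ∈ N := by
        rw [commutatorElement_def]
        exact mul_mem (hNnormal.conj_mem n hnN g) (inv_mem hnN)
      have h2 : (⁅g, n⁆ : G) ∈ (⊤ : Subgroup G).lowerCentralSeries (p + d + 1) := LabuteAux.comm_mem hg hnd
      rw [hLN]
      exact Submodule.mem_iSup_of_mem (p + d + 1)
        (Submodule.subset_span ⟨⁅g, n⁆, ⟨h1, h2⟩, rfl⟩)
    intro x y hy
    rw [hLN] at hy
    induction hy using Submodule.iSup_induction' with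
    | mem d y hy =>
      induction hy using Submodule.span_induction with
      | mem y hy =>
        obtain ⟨n, ⟨hnN, hnd⟩, rfl⟩ := hy
        have hx := htop x
        induction hx using Submodule.iSup_induction' with
        | mem p x hx =>
          induction hx using Submodule.span_induction with
          | mem x hx => obtain ⟨g, hg, rfl⟩ := hx; exact core p d g n hg hnN hnd
          | zero => rw [zero_lie]; exact zero_mem _
          | add a b _ _ ha hb => rw [add_lie]; exact add_mem ha hb
          | smul c a _ ha => rw [smul_lie]; exact Submodule.smul_mem _ _ ha
        | zero => rw [zero_lie]; exact zero_mem _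
        | add a b _ _ ha hb => rw [add_lie]; exact add_mem ha hb
      | zero => rw [lie_zero]; exact zero_mem _
      | add a b _ _ ha hb => rw [lie_add]; exact add_mem ha hb
      | smul c a _ ha => rw [lie_smul]; exact Submodule.smul_mem _ _ ha
    | zero => rw [lie_zero]; exact zero_mem _
    | add a b _ _ ha hb => rw [lie_add]; exact add_mem ha hb
  -- the Lie ideal with underlying submodule `LN`
  let K : LieIdeal ℤ L :=
    { carrier := LN
      add_mem' := fun ha hb => LN.add_mem ha hb
      zero_mem' := LN.zero_mem
      smul_mem' := fun c x hx => LN.smul_mem c hx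
      lie_mem := fun {x y} hy => hLNlie x y hy }
  have hρLN : ∀ i, ρ i ∈ LN := by
    intro i
    rw [hLN]
    exact Submodule.mem_iSup_of_mem (e - 1) (Submodule.subset_span
      ⟨r i, ⟨Subgroup.subset_normalClosure ⟨i, rfl⟩, (hr i).1⟩, rfl⟩)
  have hILN : I.toSubmodule ≤ LN := by
    have h : I ≤ K := LieSubmodule.lieSpan_le.mpr (by rintro x ⟨i, rfl⟩; exact hρLN i)
    exact fun x hx => h hx
  have hρD : ∀ i, ρ i ∈ D (e - 1) := fun i =>
    Submodule.subset_span ⟨r i, (hr i).1, rfl⟩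
  -- the ideal I is graded: projections of members of I lie in I
  have hIgr : ∀ x ∈ I, ∀ d, π d x ∈ I.toSubmodule := by
    let Ppre : Submodule ℤ L := ⨅ d, Submodule.comap (π d) I.toSubmodule
    have hPpre : ∀ x : L, x ∈ Ppre ↔ ∀ d, π d x ∈ I.toSubmodule := by
      intro x; simp [Ppre, Submodule.mem_iInf]
    have hlie : ∀ {x y : L}, y ∈ Ppre → ⁅x, y⁆ ∈ Ppre := by
      intro x y hy
      rw [hPpre] at hy ⊢
      have hx := htop x
      induction hx using Submodule.iSup_induction' with
      | mem p x hx =>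
        intro d
        have hsum : (∑ q ∈ (DirectSum.decompose D y).support, π q y) = y :=
          (Finset.sum_congr rfl fun q _ => hπ q y).trans (DirectSum.sum_support_decompose D y)
        have hterm : ∀ q : ℕ, π d ⁅x, π q y⁆ ∈ I.toSubmodule := by
          intro q
          have h1 : ⁅x, π q y⁆ ∈ D (p + q + 1) := hbr p q x hx (π q y) (hπ_memD q y)
          by_cases hq : p + q + 1 = d
          · rw [hπ_same d _ (hq ▸ h1)]
            exact I.lie_mem (hy q)
          · rw [hπ_ne _ h1 hq]; exact zero_mem _
        have heq : ⁅x, y⁆ = ∑ q ∈ (DirectSum.decompose D y).support, ⁅x, π q y⁆ := by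
          conv_lhs => rw [← hsum]
          exact LabuteAux.lie_sum _ _ _
        rw [heq, map_sum]
        exact Submodule.sum_mem _ fun q _ => hterm q
      | zero => intro d; rw [zero_lie, map_zero]; exact zero_mem _
      | add a b _ _ ha hb =>
        intro d; rw [add_lie, map_add]; exact add_mem (ha d) (hb d)
    let P : LieIdeal ℤ L :=
      { carrier := Ppre
        add_mem' := fun ha hb => Ppre.add_mem ha hb
        zero_mem' := Ppre.zero_mem
        smul_mem' := fun c x hx => Ppre.smul_mem c hx
        lie_mem := fun {x y} hy => hlie hy }
    have hIP : I ≤ P := by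
      apply LieSubmodule.lieSpan_le.mpr
      rintro x ⟨i, rfl⟩
      show ρ i ∈ Ppre
      rw [hPpre]
      intro d
      by_cases hd : e - 1 = d
      · rw [hπ_same d _ (hd ▸ hρD i)]
        exact LieSubmodule.subset_lieSpan ⟨i, rfl⟩
      · rw [hπ_ne _ (hρD i) hd]; exact zero_mem _
    intro x hx d
    have : x ∈ Ppre := hIP hx
    rw [hPpre] at this
    exact this d
  -- LN is graded
  have hLNgr : ∀ y ∈ LN, ∀ d, π d y ∈ LNd d := by
    intro y hy
    rw [hLN] at hy
    induction hy using Submodule.iSup_induction' with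
    | mem q y hy =>
      intro d
      by_cases hq : q = d
      · subst hq; rw [hπ_same q y (hLNdD q hy)]; exact hy
      · rw [hπ_ne y (hLNdD q hy) hq]; exact zero_mem _
    | zero => intro d; rw [map_zero]; exact zero_mem _
    | add a b _ _ ha hb => intro d; rw [map_add]; exact add_mem (ha d) (hb d)
  -- degree-d part of [LN, LN]
  let Bd : ℕ → Submodule ℤ L := fun d =>
    Submodule.span ℤ {z | ∃ p q : ℕ, p + q + 1 = d ∧ ∃ a ∈ LNd p, ∃ b ∈ LNd q, z = ⁅a, b⁆}
  -- [LN, LN] is graded with pieces in Bd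
  have hDLNgr : ∀ z ∈ DLN, ∀ d, π d z ∈ Bd d := by
    have core : ∀ a ∈ LN, ∀ b ∈ LN, ∀ d, π d ⁅a, b⁆ ∈ Bd d := by
      intro a ha
      rw [hLN] at ha
      induction ha using Submodule.iSup_induction' with
      | mem p a ha =>
        intro b hb
        rw [hLN] at hb
        induction hb using Submodule.iSup_induction' with
        | mem q b hb =>
          intro d
          have h1 : ⁅a, b⁆ ∈ D (p + q + 1) := hbr p q a (hLNdD p ha) b (hLNdD q hb)
          by_cases hpq : p + q + 1 = d
          · rw [hπ_same d _ (hpq ▸ h1)]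
            exact Submodule.subset_span ⟨p, q, hpq, a, ha, b, hb, rfl⟩
          · rw [hπ_ne _ h1 hpq]; exact zero_mem _
        | zero => intro d; rw [lie_zero, map_zero]; exact zero_mem _
        | add u v _ _ hu hv =>
          intro d; rw [lie_add, map_add]; exact add_mem (hu d) (hv d)
      | zero => intro b _ d; rw [zero_lie, map_zero]; exact zero_mem _
      | add u v _ _ hu hv =>
        intro b hb d; rw [add_lie, map_add]; exact add_mem (hu b hb d) (hv b hb d)
    intro z hz
    induction hz using Submodule.span_induction with
    | mem z hz =>
      obtain ⟨a, ha, b, hb, rfl⟩ := hz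
      exact core a ha b hb
    | zero => intro d; rw [map_zero]; exact zero_mem _
    | add u v _ _ hu hv => intro d; rw [map_add]; exact add_mem (hu d) (hv d)
    | smul c u _ hu => intro d; rw [map_smul]; exact Submodule.smul_mem _ _ (hu d)
  constructor
  · intro h
    exact h ▸ le_sup_left
  · intro hsup
    -- the main induction on degree
    have main : ∀ d : ℕ, LNd d ≤ I.toSubmodule := by
      intro d
      induction d using Nat.strong_induction_on with
      | _ d ih =>
        intro x hx
        have hxLN : x ∈ LN := hLN ▸ Submodule.mem_iSup_of_mem d hx
        obtain ⟨a, ha, b, hb, hab⟩ := Submodule.mem_sup.mp (hsup hxLN)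
        have hxd : π d x = x := hπ_same d x (hLNdD d hx)
        have h1 : π d a ∈ I.toSubmodule := hIgr a ha d
        have h2 : π d b ∈ Bd d := hDLNgr b hb d
        have hBd : Bd d ≤ I.toSubmodule := by
          rw [Submodule.span_le]
          rintro z ⟨p, q, hpq, a', ha', b', hb', rfl⟩
          have hp : p < d := by omega
          have ha'I : a' ∈ I := ih p hp ha'
          have hba : ⁅b', a'⁆ ∈ I := I.lie_mem ha'I
          have : -⁅b', a'⁆ ∈ I := neg_mem hba
          rw [lie_skew] at this
          exact this
        have : π d x ∈ I.toSubmodule := by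
          rw [← hab, map_add]
          exact add_mem h1 (hBd h2)
        rwa [hxd] at this
    apply le_antisymm hILN
    rw [hLN]
    exact iSup_le main

end
end
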